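/- arXiv:1104.1442 — 3 statements merged into one kernel-verified Lean document; each statement's English description precedes it below -/
import Mathlib

section
/- Let (Σ_A, T) be a topologically mixing subshift of finite type, Φ ∈ C_aa(Σ_A,T,d), and let 0 < C_1 ≤ C_2 be constants. Define ‖Φ‖_n^⋆ := max{‖Φ‖_l : C_1 n ≤ l ≤ C_2 n}. Then ‖Φ‖_n^⋆/n → 0 as n → ∞; in particular lim_{n→∞} ‖Φ‖_n/n = 0. -/
open Filter Topology MeasureTheory Set
open scoped ENNReal NNReal

namespace AlmostAdditivePaper

variable {m : ℕ}

/-- The one-sided subshift of finite type determined by a transition matrix `A`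
(with entries `0`/`1`). -/
abbrev Subshift (A : Matrix (Fin m) (Fin m) ℕ) : Type :=
  {x : ℕ → Fin m // ∀ n, A (x n) (x (n + 1)) = 1}

/-- The left shift map `T`. -/
def shiftT (A : Matrix (Fin m) (Fin m) ℕ) : Subshift A → Subshift A :=
  fun x => ⟨fun n => x.1 (n + 1), fun n => x.2 (n + 1)⟩

/-- `A` is a 0-1 matrix with `A ^ p₀ > 0` entrywise for some `p₀ ≥ 1`:
the subshift `Σ_A` is topologically mixing. -/
def Mixing (A : Matrix (Fin m) (Fin m) ℕ) : Prop :=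
  (∀ i j, A i j = 0 ∨ A i j = 1) ∧ ∃ p₀ : ℕ, 0 < p₀ ∧ ∀ i j, 0 < (A ^ p₀) i j

/-- Scalar almost additive potential `Φ = (φ_n)_{n ≥ 1}` with constant `C = C(Φ)`;
we use the convention `φ₀ = 0`. -/
structure AlmostAdditive (A : Matrix (Fin m) (Fin m) ℕ)
    (Φ : ℕ → Subshift A → ℝ) (C : ℝ) : Prop where
  posC : 0 < C
  cont : ∀ n, Continuous (Φ n)
  zero : ∀ x, Φ 0 x = 0
  upper : ∀ n p x, Φ (n + p) x ≤ Φ n x + Φ p ((shiftT A)^[n] x) + C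
  lower : ∀ n p x, Φ n x + Φ p ((shiftT A)^[n] x) - C ≤ Φ (n + p) x

/-- Vector-valued almost additive potential: each component is almost additive,
with constant `C j` for the `j`-th component. -/
def AlmostAdditiveVec {d : ℕ} (A : Matrix (Fin m) (Fin m) ℕ)
    (Φ : ℕ → Subshift A → EuclideanSpace ℝ (Fin d)) (C : Fin d → ℝ) : Prop :=
  ∀ j : Fin d, AlmostAdditive A (fun n x => Φ n x j) (C j)

/-- The cylinder `[w]` of a word `w`. -/
def cyl (A : Matrix (Fin m) (Fin m) ℕ) (w : List (Fin m)) : Set (Subshift A) :=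
  {x | ∀ i : Fin w.length, x.1 i.1 = w.get i}

/-- The word `w` is admissible. -/
def AdmWord (A : Matrix (Fin m) (Fin m) ℕ) (w : List (Fin m)) : Prop :=
  ∀ i : ℕ, (h : i + 1 < w.length) → A (w.get ⟨i, by omega⟩) (w.get ⟨i + 1, h⟩) = 1

/-- `x|_n`, the prefix of length `n` of `x ∈ Σ_A`. -/
def wordPrefix {A : Matrix (Fin m) (Fin m) ℕ} (x : Subshift A) (n : ℕ) : List (Fin m) :=
  List.ofFn fun i : Fin n => x.1 i

/-- `Φ[w] := sup {exp (φ_{|w|}(x)) : x ∈ [w]}`. -/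
noncomputable def wordSup (A : Matrix (Fin m) (Fin m) ℕ) (Φ : ℕ → Subshift A → ℝ)
    (w : List (Fin m)) : ℝ :=
  sSup ((fun x => Real.exp (Φ w.length x)) '' cyl A w)

/-- The distance `d_Ψ(x,y) = Ψ[x ∧ y]` associated with a potential `Ψ`. -/
noncomputable def dPsi (A : Matrix (Fin m) (Fin m) ℕ) (Ψ : ℕ → Subshift A → ℝ)
    (x y : Subshift A) : ℝ :=
  letI := Classical.dec (x = y)
  if h : x = y then 0
  else wordSup A Ψ (wordPrefix x (Nat.find (show ∃ n, x.1 n ≠ y.1 n by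
    by_contra hc
    push_neg at hc
    exact h (Subtype.ext (funext hc)))))

/-- The closed ball of center `x` and radius `r` for `d_Ψ`. -/
def ballD (A : Matrix (Fin m) (Fin m) ℕ) (Ψ : ℕ → Subshift A → ℝ)
    (x : Subshift A) (r : ℝ) : Set (Subshift A) :=
  {y | dPsi A Ψ x y ≤ r}

/-- `B_t(Ψ)`: words whose cylinder is a closed ball of radius `e^{-t}` in `(Σ_A, d_Ψ)`. -/
def Bn (A : Matrix (Fin m) (Fin m) ℕ) (Ψ : ℕ → Subshift A → ℝ) (t : ℝ) :
    Set (List (Fin m)) :=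
  {w | ∃ x, cyl A w = ballD A Ψ x (Real.exp (-t))}

variable {E : Type*} [NormedAddCommGroup E] [NormedSpace ℝ E]

/-- `‖φ‖_n := sup {|φ(x) − φ(y)| : x|_n = y|_n}`. -/
noncomputable def varN (A : Matrix (Fin m) (Fin m) ℕ) (φ : Subshift A → E) (n : ℕ) : ℝ :=
  sSup {r | ∃ x y : Subshift A, wordPrefix x n = wordPrefix y n ∧ r = ‖φ x - φ y‖}

/-- The sup norm `‖φ‖_∞`. -/
noncomputable def supNorm (A : Matrix (Fin m) (Fin m) ℕ) (φ : Subshift A → E) : ℝ :=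
  sSup (Set.range fun x => ‖φ x‖)

/-- `‖Φ − Θ‖_lim := limsup_n ‖φ_n − θ_n‖_∞ / n`. -/
noncomputable def limNorm (A : Matrix (Fin m) (Fin m) ℕ) (Φ Θ : ℕ → Subshift A → E) : ℝ :=
  Filter.limsup (fun n : ℕ => supNorm A (fun x => Φ n x - Θ n x) / n) atTop

/-- `Φ_max := max φ₁ + C(Φ)`. -/
noncomputable def PhiMax (A : Matrix (Fin m) (Fin m) ℕ) (Φ : ℕ → Subshift A → ℝ)
    (C : ℝ) : ℝ :=
  sSup (Set.range (Φ 1)) + C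

/-- `Φ_min := min φ₁ − C(Φ)`. -/
noncomputable def PhiMin (A : Matrix (Fin m) (Fin m) ℕ) (Φ : ℕ → Subshift A → ℝ)
    (C : ℝ) : ℝ :=
  sInf (Set.range (Φ 1)) - C

/-- `‖Φ‖ := |Φ_max| ∨ |Φ_min|`. -/
noncomputable def PhiNorm (A : Matrix (Fin m) (Fin m) ℕ) (Φ : ℕ → Subshift A → ℝ)
    (C : ℝ) : ℝ :=
  max |PhiMax A Φ C| |PhiMin A Φ C|

/-- `μ` is a `T`-invariant Borel probability measure. -/
def InvMeasure (A : Matrix (Fin m) (Fin m) ℕ) (μ : Measure (Subshift A)) : Prop :=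
  IsProbabilityMeasure μ ∧ μ.map (shiftT A) = μ

/-- `L_Φ = {Φ_*(μ) : μ ∈ M(Σ_A,T)}`, where `Φ_*(μ) = lim_n (1/n) ∫ φ_n dμ`. -/
def LPhi (A : Matrix (Fin m) (Fin m) ℕ) (Φ : ℕ → Subshift A → E) : Set E :=
  {α | ∃ μ : Measure (Subshift A), InvMeasure A μ ∧
      Tendsto (fun n : ℕ => (n : ℝ)⁻¹ • ∫ x, Φ n x ∂μ) atTop (𝓝 α)}

/-- `Φ_*(μ) = lim_n (1/n) ∫ φ_n dμ`. -/
noncomputable def potStar (A : Matrix (Fin m) (Fin m) ℕ) (Φ : ℕ → Subshift A → E)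
    (μ : Measure (Subshift A)) : E :=
  limUnder atTop fun n : ℕ => (n : ℝ)⁻¹ • ∫ x, Φ n x ∂μ

/-- Entropy of the partition of `Σ_A` into cylinders of length `n`. -/
noncomputable def cylEnt (A : Matrix (Fin m) (Fin m) ℕ) (μ : Measure (Subshift A))
    (n : ℕ) : ℝ :=
  ∑ w : Fin n → Fin m, Real.negMulLog ((μ (cyl A (List.ofFn w))).toReal)

/-- The measure-theoretic (Kolmogorov–Sinai) entropy `h_μ(T)`, computed through the
natural generating partition into cylinders. -/
noncomputable def entKS (A : Matrix (Fin m) (Fin m) ℕ) (μ : Measure (Subshift A)) : ℝ :=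
  limUnder atTop fun n : ℕ => cylEnt A μ n / n

/-- The level set `E_Φ(α) = {x : lim_n φ_n(x)/n = α}`. -/
def EPhi (A : Matrix (Fin m) (Fin m) ℕ) (Φ : ℕ → Subshift A → E) (α : E) :
    Set (Subshift A) :=
  {x | Tendsto (fun n : ℕ => (n : ℝ)⁻¹ • Φ n x) atTop (𝓝 α)}

/-- The localized level set `E_Φ(ξ) = {x : lim_n φ_n(x)/n = ξ(x)}`. -/
def EPhiXi (A : Matrix (Fin m) (Fin m) ℕ) (Φ : ℕ → Subshift A → E)
    (ξ : Subshift A → E) : Set (Subshift A) :=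
  {x | Tendsto (fun n : ℕ => (n : ℝ)⁻¹ • Φ n x) atTop (𝓝 (ξ x))}

/-- `F(α,t,ε,Φ,Ψ)`. -/
def Fset (A : Matrix (Fin m) (Fin m) ℕ) (Φ : ℕ → Subshift A → E)
    (Ψ : ℕ → Subshift A → ℝ) (α : E) (t ε : ℝ) : Set (List (Fin m)) :=
  {u | u ∈ Bn A Ψ t ∧ ∃ x ∈ cyl A u, ‖(u.length : ℝ)⁻¹ • Φ u.length x - α‖ < ε}

/-- `f(α,t,ε,Φ,Ψ) = # F(α,t,ε,Φ,Ψ)`. -/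
noncomputable def fcard (A : Matrix (Fin m) (Fin m) ℕ) (Φ : ℕ → Subshift A → E)
    (Ψ : ℕ → Subshift A → ℝ) (α : E) (t ε : ℝ) : ℕ :=
  Nat.card (Fset A Φ Ψ α t ε)

/-- The large deviation spectrum
`Λ(α) = lim_{ε → 0⁺} limsup_n log f(α,n,ε) / n`. -/
noncomputable def LambdaD (A : Matrix (Fin m) (Fin m) ℕ) (Φ : ℕ → Subshift A → E)
    (Ψ : ℕ → Subshift A → ℝ) (α : E) : ℝ :=
  limUnder (𝓝[>] (0 : ℝ)) fun ε : ℝ =>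
    Filter.limsup (fun n : ℕ => Real.log (fcard A Φ Ψ α n ε) / n) atTop

/-- `D(Ψ) = lim_n log (# B_n(Ψ)) / n`. -/
noncomputable def DPsi (A : Matrix (Fin m) (Fin m) ℕ) (Ψ : ℕ → Subshift A → ℝ) : ℝ :=
  limUnder atTop fun n : ℕ => Real.log (Nat.card (Bn A Ψ (n : ℝ))) / n

/-- The conditional variational principle quantity
`E(α) = sup {h_μ(T)/(-Ψ_*(μ)) : μ invariant, Φ_*(μ) = α}`. -/
noncomputable def EEsup (A : Matrix (Fin m) (Fin m) ℕ) (Φ : ℕ → Subshift A → E)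
    (Ψ : ℕ → Subshift A → ℝ) (α : E) : ℝ :=
  sSup {r | ∃ μ : Measure (Subshift A), InvMeasure A μ ∧ potStar A Φ μ = α ∧
    r = entKS A μ / (-(potStar A Ψ μ))}

/-! ### Dimensions relative to a distance function `ρ` -/

/-- Diameter of a set, relative to a distance function `ρ`. -/
noncomputable def setDiam {X : Type*} (ρ : X → X → ℝ) (U : Set X) : ℝ≥0∞ :=
  ⨆ x ∈ U, ⨆ y ∈ U, ENNReal.ofReal (ρ x y)

/-- `s`-dimensional Hausdorff measure relative to `ρ`. -/
noncomputable def hMeasD {X : Type*} (ρ : X → X → ℝ) (s : ℝ) (e : Set X) : ℝ≥0∞ :=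
  ⨆ (δ : ℝ) (_ : 0 < δ),
    ⨅ (U : ℕ → Set X) (_ : e ⊆ ⋃ n, U n) (_ : ∀ n, setDiam ρ (U n) ≤ ENNReal.ofReal δ),
      ∑' n, setDiam ρ (U n) ^ s

/-- Hausdorff dimension relative to `ρ`. -/
noncomputable def hdimD {X : Type*} (ρ : X → X → ℝ) (e : Set X) : ℝ≥0∞ :=
  ⨆ (s : ℝ≥0) (_ : hMeasD ρ (s : ℝ) e = ⊤), (s : ℝ≥0∞)

/-- Minimal number of sets of diameter `≤ δ` needed to cover `e` (relative to `ρ`). -/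
noncomputable def coverNum {X : Type*} (ρ : X → X → ℝ) (e : Set X) (δ : ℝ) : ℕ :=
  sInf {k : ℕ | ∃ U : Fin k → Set X, e ⊆ ⋃ i, U i ∧ ∀ i, setDiam ρ (U i) ≤ ENNReal.ofReal δ}

/-- Upper box-counting dimension relative to `ρ`. -/
noncomputable def uboxD {X : Type*} (ρ : X → X → ℝ) (e : Set X) : ℝ≥0∞ :=
  Filter.limsup (fun n : ℕ =>
    ENNReal.ofReal (Real.log (coverNum ρ e (Real.exp (-(n : ℝ)))) / n)) atTop

/-- Lower box-counting dimension relative to `ρ`. -/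
noncomputable def lboxD {X : Type*} (ρ : X → X → ℝ) (e : Set X) : ℝ≥0∞ :=
  Filter.liminf (fun n : ℕ =>
    ENNReal.ofReal (Real.log (coverNum ρ e (Real.exp (-(n : ℝ)))) / n)) atTop

/-- Packing dimension relative to `ρ` (via the modified upper box dimension). -/
noncomputable def pdimD {X : Type*} (ρ : X → X → ℝ) (e : Set X) : ℝ≥0∞ :=
  ⨅ (F : ℕ → Set X) (_ : e ⊆ ⋃ n, F n), ⨆ n, uboxD ρ (F n)

/-! ### Weak concavity and cone points -/

/-- `h` is weakly concave on the convex set `s`. -/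
def WeaklyConcaveOn {V : Type*} [AddCommGroup V] [Module ℝ V] (s : Set V) (h : V → ℝ) :
    Prop :=
  ∃ c : ℝ, 1 ≤ c ∧ ∀ α ∈ s, ∀ β ∈ s, ∃ γ₁ ∈ Set.Icc c⁻¹ c, ∃ γ₂ ∈ Set.Icc c⁻¹ c,
    ∀ l ∈ Set.Icc (0 : ℝ) 1,
      l * h α + (1 - l) * h β ≤
        h ((l * γ₁ + (1 - l) * γ₂)⁻¹ • ((l * γ₁) • α + ((1 - l) * γ₂) • β))

/-- `x` is an `ε`-cone point of `s`. -/
def IsConePoint {V : Type*} [NormedAddCommGroup V] [NormedSpace ℝ V] (s : Set V)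
    (x : V) (ε : ℝ) : Prop :=
  ∀ y ∈ s ∩ Metric.ball x ε, y ≠ x → segment ℝ x (x + (ε / ‖y - x‖) • (y - x)) ⊆ s

/-- `x` is a local cone point of `s`. -/
def IsLocalConePoint {V : Type*} [NormedAddCommGroup V] [NormedSpace ℝ V] (s : Set V)
    (x : V) : Prop :=
  ∃ ε > 0, IsConePoint s x ε

variable {A : Matrix (Fin m) (Fin m) ℕ}

instance : CompactSpace (Subshift A) := by
  have hcl : IsClosed {x : ℕ → Fin m | ∀ n, A (x n) (x (n + 1)) = 1} := by
    have : {x : ℕ → Fin m | ∀ n, A (x n) (x (n + 1)) = 1} =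
        ⋂ n : ℕ, {x : ℕ → Fin m | A (x n) (x (n + 1)) = 1} := by ext x; simp
    rw [this]
    refine isClosed_iInter fun n => ?_
    have : Continuous fun x : ℕ → Fin m => A (x n) (x (n + 1)) := by
      have h1 : Continuous fun x : ℕ → Fin m => (x n, x (n + 1)) :=
        (continuous_apply n).prodMk (continuous_apply (n + 1))
      exact (continuous_of_discreteTopology (f := fun p : Fin m × Fin m => A p.1 p.2)).comp h1
    exact isClosed_eq this continuous_const
  exact isCompact_iff_compactSpace.mp hcl.isCompact

lemma samePrefix_iff (x y : Subshift A) (n : ℕ) :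
    wordPrefix x n = wordPrefix y n ↔ ∀ i < n, x.1 i = y.1 i := by
  rw [wordPrefix, wordPrefix, List.ofFn_inj]
  constructor
  · intro h i hi; exact congrFun h ⟨i, hi⟩
  · intro h; funext i; exact h i i.2

lemma shift_iter (k : ℕ) (x : Subshift A) (i : ℕ) :
    ((shiftT A)^[k] x).1 i = x.1 (i + k) := by
  induction k generalizing x i with
  | zero => rfl
  | succ k ih =>
    rw [Function.iterate_succ_apply, ih]
    show x.1 (i + k + 1) = x.1 (i + (k + 1))
    rw [Nat.add_assoc]

lemma exists_bound {φ : Subshift A → E} (hφ : Continuous φ) :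
    ∃ M : ℝ, ∀ x, ‖φ x‖ ≤ M := by
  obtain ⟨M, hM⟩ := (isCompact_range hφ.norm).bddAbove
  exact ⟨M, fun x => hM ⟨x, rfl⟩⟩

lemma varSet_bddAbove {φ : Subshift A → E} (hφ : Continuous φ) (n : ℕ) :
    BddAbove {r | ∃ x y : Subshift A, wordPrefix x n = wordPrefix y n ∧ r = ‖φ x - φ y‖} := by
  obtain ⟨M, hM⟩ := exists_bound hφ
  refine ⟨2 * M, fun r hr => ?_⟩
  obtain ⟨x, y, -, rfl⟩ := hr
  calc ‖φ x - φ y‖ ≤ ‖φ x‖ + ‖φ y‖ := norm_sub_le _ _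
  _ ≤ 2 * M := by have := hM x; have := hM y; linarith

lemma varN_nonneg (φ : Subshift A → E) (n : ℕ) : 0 ≤ varN A φ n :=
  Real.sSup_nonneg fun r ⟨x, y, _, hr⟩ => hr ▸ norm_nonneg _

lemma le_varN {φ : Subshift A → E} (hφ : Continuous φ) {n : ℕ} {x y : Subshift A}
    (h : wordPrefix x n = wordPrefix y n) : ‖φ x - φ y‖ ≤ varN A φ n :=
  le_csSup (varSet_bddAbove hφ n) ⟨x, y, h, rfl⟩

lemma varN_antitone {φ : Subshift A → E} (hφ : Continuous φ) {n n' : ℕ} (h : n ≤ n') :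
    varN A φ n' ≤ varN A φ n := by
  refine Real.sSup_le (fun r hr => ?_) (varN_nonneg φ n)
  obtain ⟨x, y, hxy, rfl⟩ := hr
  refine le_varN hφ ?_
  rw [samePrefix_iff] at hxy ⊢
  exact fun i hi => hxy i (hi.trans_le h)

lemma varN_small {φ : Subshift A → E} (hφ : Continuous φ) {ε : ℝ} (hε : 0 < ε) :
    ∃ N, ∀ n ≥ N, varN A φ n ≤ ε := by
  set D : ℕ → Set (Subshift A × Subshift A) := fun n =>
    {q | (∀ i < n, q.1.1 i = q.2.1 i) ∧ ε ≤ ‖φ q.1 - φ q.2‖} with hD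
  have hclosed : ∀ n, IsClosed (D n) := by
    intro n
    have h1 : IsClosed {q : Subshift A × Subshift A | ∀ i < n, q.1.1 i = q.2.1 i} := by
      have : {q : Subshift A × Subshift A | ∀ i < n, q.1.1 i = q.2.1 i} =
          ⋂ (i : ℕ) (_ : i < n), {q : Subshift A × Subshift A | q.1.1 i = q.2.1 i} := by
        ext q; simp
      rw [this]
      refine isClosed_iInter fun i => isClosed_iInter fun _ => ?_
      exact isClosed_eq ((continuous_apply i).comp (continuous_subtype_val.comp continuous_fst))
        ((continuous_apply i).comp (continuous_subtype_val.comp continuous_snd))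
    have h2 : IsClosed {q : Subshift A × Subshift A | ε ≤ ‖φ q.1 - φ q.2‖} :=
      isClosed_le continuous_const ((hφ.comp continuous_fst).sub (hφ.comp continuous_snd)).norm
    exact h1.inter h2
  have hmono : ∀ i, D (i + 1) ⊆ D i := by
    intro i q hq
    exact ⟨fun j hj => hq.1 j (by omega), hq.2⟩
  by_cases hne : ∀ i, (D i).Nonempty
  · exfalso
    obtain ⟨q, hq⟩ := IsCompact.nonempty_iInter_of_sequence_nonempty_isCompact_isClosed D hmono
      hne ((hclosed 0).isCompact) hclosed
    simp only [Set.mem_iInter] at hq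
    have : q.1 = q.2 := Subtype.ext (funext fun i => (hq (i + 1)).1 i (by omega))
    have h2 := (hq 0).2
    rw [this, sub_self, norm_zero] at h2
    linarith
  · push_neg at hne
    obtain ⟨N, hN⟩ := hne
    refine ⟨N, fun n hn => Real.sSup_le (fun r hr => ?_) hε.le⟩
    obtain ⟨x, y, hxy, rfl⟩ := hr
    by_contra hlt
    push_neg at hlt
    rw [samePrefix_iff] at hxy
    exact (Set.not_nonempty_iff_eq_empty.mpr hN)
      ⟨(x, y), fun i hi => hxy i (hi.trans_le hn), hlt.le⟩

lemma scalar_est {ψ : ℕ → Subshift A → ℝ} {c : ℝ} (h : AlmostAdditive A ψ c)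
    {ε : ℝ} (hε : 0 < ε) : ∃ N : ℕ, ∀ n ≥ N, varN A (ψ n) n ≤ ε * n := by
  have hc := h.posC
  -- choose the block length p
  set p : ℕ := ⌈6 * c / ε⌉₊ + 1 with hpdef
  have hp : 0 < p := Nat.succ_pos _
  have hpR : 6 * c / ε ≤ (p : ℝ) := le_trans (Nat.le_ceil _) (by rw [hpdef]; push_cast; linarith)
  have hpR' : (0 : ℝ) < p := by positivity
  have hpε : 2 * c / p ≤ ε / 3 := by
    rw [div_le_div_iff₀ hpR' (by norm_num)]
    rw [div_le_iff₀ hε] at hpR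
    linarith
  set M : ℝ := ∑ r ∈ Finset.range p, varN A (ψ r) r with hMdef
  have hM0 : 0 ≤ M := Finset.sum_nonneg fun r _ => varN_nonneg _ _
  set v : ℕ → ℝ := fun l => varN A (ψ p) l with hvdef
  have hv0 : ∀ l, 0 ≤ v l := fun l => varN_nonneg _ _
  -- key pointwise estimate
  have key : ∀ n (x y : Subshift A), wordPrefix x n = wordPrefix y n →
      |ψ n x - ψ n y| ≤ M + 2 * c * (n / p : ℕ) +
        ∑ j ∈ Finset.range (n / p), v (n - j * p) := by
    intro n
    induction n using Nat.strong_induction_on with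
    | _ n ih =>
      intro x y hxy
      by_cases hpn : n < p
      · rw [Nat.div_eq_of_lt hpn]
        have h1 : |ψ n x - ψ n y| ≤ varN A (ψ n) n := by
          rw [← Real.norm_eq_abs]; exact le_varN (h.cont n) hxy
        have h2 : varN A (ψ n) n ≤ M :=
          Finset.single_le_sum (f := fun r => varN A (ψ r) r)
            (fun i _ => varN_nonneg _ _) (Finset.mem_range.mpr hpn)
        simp only [Finset.range_zero, Finset.sum_empty, Nat.cast_zero]
        linarith
      · push_neg at hpn
        have hts : wordPrefix ((shiftT A)^[p] x) (n - p) =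
            wordPrefix ((shiftT A)^[p] y) (n - p) := by
          rw [samePrefix_iff] at hxy ⊢
          intro i hi
          rw [shift_iter, shift_iter]
          exact hxy _ (by omega)
        have hn0 : 0 < n := lt_of_lt_of_le hp hpn
        have hIH := ih (n - p) (by omega) _ _ hts
        have hvp : |ψ p x - ψ p y| ≤ v n := by
          rw [← Real.norm_eq_abs]; exact le_varN (h.cont p) hxy
        have hup_x := h.upper p (n - p) x
        have hlo_x := h.lower p (n - p) x
        have hup_y := h.upper p (n - p) y
        have hlo_y := h.lower p (n - p) y
        have hpn' : p + (n - p) = n := by omega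
        rw [hpn'] at hup_x hlo_x hup_y hlo_y
        set a := ψ p x - ψ p y with hadef
        set b := ψ (n - p) ((shiftT A)^[p] x) - ψ (n - p) ((shiftT A)^[p] y) with hbdef
        have habs : |ψ n x - ψ n y| ≤ |a| + |b| + 2 * c := by
          have la := le_abs_self a
          have la' := neg_le_abs a
          have lb := le_abs_self b
          have lb' := neg_le_abs b
          rw [abs_le]
          constructor <;> simp only [hadef, hbdef] at * <;> [linarith; linarith]
        have hdiv : n / p = (n - p) / p + 1 := Nat.div_eq_sub_div hp hpn
        have hsum : ∑ j ∈ Finset.range (n / p), v (n - j * p) =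
            (∑ j ∈ Finset.range ((n - p) / p), v (n - p - j * p)) + v n := by
          rw [hdiv, Finset.sum_range_succ']
          congr 1
          · refine Finset.sum_congr rfl fun j _ => ?_
            congr 1
            have hjp : (j + 1) * p = p + j * p := by ring
            rw [hjp, ← Nat.sub_sub]
          · norm_num
        rw [hsum, hdiv]
        push_cast
        linarith
  -- the variation bound
  have bound2 : ∀ n, varN A (ψ n) n ≤ M + 2 * c * (n / p : ℕ) +
      ∑ j ∈ Finset.range (n / p), v (n - j * p) := by
    intro n
    refine Real.sSup_le (fun r hr => ?_) ?_
    · obtain ⟨x, y, hxy, rfl⟩ := hr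
      rw [Real.norm_eq_abs]
      exact key n x y hxy
    · have : (0:ℝ) ≤ ∑ j ∈ Finset.range (n / p), v (n - j * p) :=
        Finset.sum_nonneg fun j _ => hv0 _
      positivity
  -- compare the sum terms with v ((j+1)*p)
  have hcomp : ∀ n, ∑ j ∈ Finset.range (n / p), v (n - j * p) ≤
      ∑ j ∈ Finset.range (n / p), v ((j + 1) * p) := by
    intro n
    set k := n / p with hk
    have h1 : ∑ j ∈ Finset.range k, v (n - j * p) ≤ ∑ j ∈ Finset.range k, v ((k - j) * p) := by
      refine Finset.sum_le_sum fun j _ => ?_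
      refine varN_antitone (h.cont p) ?_
      calc (k - j) * p = k * p - j * p := Nat.sub_mul _ _ _
      _ ≤ n - j * p := Nat.sub_le_sub_right (Nat.div_mul_le_self n p) _
    have h2 : ∑ j ∈ Finset.range k, v ((k - j) * p) =
        ∑ j ∈ Finset.range k, v ((k - 1 - j + 1) * p) := by
      refine Finset.sum_congr rfl fun j hj => ?_
      rw [Finset.mem_range] at hj
      congr 2
      omega
    have h3 : ∑ j ∈ Finset.range k, v ((k - 1 - j + 1) * p) =
        ∑ j ∈ Finset.range k, v ((j + 1) * p) :=
      Finset.sum_range_reflect (fun j => v ((j + 1) * p)) k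
    rw [h2, h3] at h1
    exact h1
  -- tail of v is small
  obtain ⟨L, hL⟩ := varN_small (h.cont p) (show (0:ℝ) < ε / 3 by linarith)
  set S1 : ℝ := ∑ j ∈ Finset.range L, v ((j + 1) * p) with hS1def
  have hS10 : 0 ≤ S1 := Finset.sum_nonneg fun j _ => hv0 _
  have tail : ∀ k : ℕ, ∑ j ∈ Finset.range k, v ((j + 1) * p) ≤ S1 + (ε / 3) * k := by
    intro k
    rw [← Finset.sum_filter_add_sum_filter_not (Finset.range k) (· < L)]
    have hA1 : ∑ j ∈ (Finset.range k).filter (· < L), v ((j + 1) * p) ≤ S1 := by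
      refine Finset.sum_le_sum_of_subset_of_nonneg ?_ (fun j _ _ => hv0 _)
      intro j hj
      rw [Finset.mem_filter] at hj
      exact Finset.mem_range.mpr hj.2
    have hA2 : ∑ j ∈ (Finset.range k).filter (¬ · < L), v ((j + 1) * p) ≤ (ε / 3) * k := by
      have : ∀ j ∈ (Finset.range k).filter (¬ · < L), v ((j + 1) * p) ≤ ε / 3 := by
        intro j hj
        rw [Finset.mem_filter] at hj
        refine hL _ ?_
        have : j + 1 ≤ (j + 1) * p := Nat.le_mul_of_pos_right _ hp
        omega
      calc ∑ j ∈ (Finset.range k).filter (¬ · < L), v ((j + 1) * p)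
          ≤ ((Finset.range k).filter (¬ · < L)).card • (ε / 3) :=
            Finset.sum_le_card_nsmul _ _ _ this
      _ = ((Finset.range k).filter (¬ · < L)).card * (ε / 3) := nsmul_eq_mul _ _
      _ ≤ k * (ε / 3) := by
          have hcard : ((Finset.range k).filter (¬ · < L)).card ≤ k := by
            calc ((Finset.range k).filter (¬ · < L)).card
                ≤ (Finset.range k).card := Finset.card_filter_le _ _
            _ = k := Finset.card_range k
          have : ((((Finset.range k).filter (¬ · < L)).card : ℝ)) ≤ (k : ℝ) := by
            exact_mod_cast hcard
          nlinarith
      _ = (ε / 3) * k := by ring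
    linarith
  -- choose N
  refine ⟨⌈(M + S1) * 3 / ε⌉₊, fun n hn => ?_⟩
  have hnR : (M + S1) * 3 / ε ≤ (n : ℝ) := le_trans (Nat.le_ceil _) (by exact_mod_cast hn)
  have hMS : M + S1 ≤ ε / 3 * n := by
    rw [div_le_iff₀ hε] at hnR; linarith
  have hk1 : ((n / p : ℕ) : ℝ) ≤ (n : ℝ) / p := Nat.cast_div_le
  have hk2 : ((n / p : ℕ) : ℝ) ≤ (n : ℝ) := by
    have := Nat.div_le_self n p; exact_mod_cast this
  have hterm1 : 2 * c * ((n / p : ℕ) : ℝ) ≤ ε / 3 * n := by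
    have h1 : 2 * c * ((n / p : ℕ) : ℝ) ≤ 2 * c * ((n : ℝ) / p) := by nlinarith
    have h2 : 2 * c * ((n : ℝ) / p) = (2 * c / p) * n := by ring
    have h3 : (2 * c / p) * n ≤ (ε / 3) * n := by
      have : (0:ℝ) ≤ (n:ℝ) := Nat.cast_nonneg n
      nlinarith
    linarith
  have hterm2 : ∑ j ∈ Finset.range (n / p), v (n - j * p) ≤ S1 + ε / 3 * n := by
    calc ∑ j ∈ Finset.range (n / p), v (n - j * p)
        ≤ ∑ j ∈ Finset.range (n / p), v ((j + 1) * p) := hcomp n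
    _ ≤ S1 + (ε / 3) * ((n / p : ℕ) : ℝ) := tail _
    _ ≤ S1 + ε / 3 * n := by nlinarith
  calc varN A (ψ n) n ≤ M + 2 * c * (n / p : ℕ) +
      ∑ j ∈ Finset.range (n / p), v (n - j * p) := bound2 n
  _ ≤ ε * n := by linarith


lemma euclid_norm_le_sum {d : ℕ} (w : EuclideanSpace ℝ (Fin d)) : ‖w‖ ≤ ∑ j, |w j| := by
  rw [EuclideanSpace.norm_eq]
  have hs : 0 ≤ ∑ j, |w j| := Finset.sum_nonneg fun j _ => abs_nonneg _
  have h1 : ∑ j, ‖w j‖ ^ 2 ≤ (∑ j, |w j|) ^ 2 := by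
    have hterm : ∀ j ∈ Finset.univ, ‖w j‖ ^ 2 ≤ |w j| * ∑ i, |w i| := by
      intro j _
      rw [Real.norm_eq_abs, sq]
      exact mul_le_mul_of_nonneg_left
        (Finset.single_le_sum (f := fun i => |w i|) (fun i _ => abs_nonneg _) (Finset.mem_univ j)) (abs_nonneg _)
    calc ∑ j, ‖w j‖ ^ 2 ≤ ∑ j, |w j| * ∑ i, |w i| := Finset.sum_le_sum hterm
    _ = (∑ j, |w j|) ^ 2 := by rw [← Finset.sum_mul, sq]
  calc √(∑ j, ‖w j‖ ^ 2) ≤ √((∑ j, |w j|) ^ 2) := Real.sqrt_le_sqrt h1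
  _ = ∑ j, |w j| := Real.sqrt_sq hs

lemma vec_est {d : ℕ} {Φ : ℕ → Subshift A → EuclideanSpace ℝ (Fin d)} {C : Fin d → ℝ}
    (hΦ : AlmostAdditiveVec A Φ C) {ε : ℝ} (hε : 0 < ε) :
    ∃ N : ℕ, ∀ n ≥ N, varN A (Φ n) n ≤ ε * n := by
  have hd : (0:ℝ) < (d : ℝ) + 1 := by positivity
  have hε' : 0 < ε / ((d : ℝ) + 1) := by positivity
  choose N hN using fun j : Fin d => scalar_est (hΦ j) hε'
  refine ⟨Finset.univ.sup N, fun n hn => ?_⟩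
  refine Real.sSup_le (fun r hr => ?_) (by positivity)
  obtain ⟨x, y, hxy, rfl⟩ := hr
  have h1 : ‖Φ n x - Φ n y‖ ≤ ∑ j, |(Φ n x - Φ n y) j| := euclid_norm_le_sum _
  have h2 : ∀ j : Fin d, |(Φ n x - Φ n y) j| ≤ ε / ((d : ℝ) + 1) * n := by
    intro j
    have he : |(Φ n x - Φ n y) j| = ‖(fun z => Φ n z j) x - (fun z => Φ n z j) y‖ := by
      simp [Real.norm_eq_abs]
    rw [he]
    calc ‖(fun z => Φ n z j) x - (fun z => Φ n z j) y‖
        ≤ varN A (fun z => Φ n z j) n := le_varN ((hΦ j).cont n) hxy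
    _ ≤ ε / ((d : ℝ) + 1) * n :=
        hN j n (le_trans (Finset.le_sup (Finset.mem_univ j)) hn)
  have h3 : ∑ j : Fin d, |(Φ n x - Φ n y) j| ≤ (d : ℝ) * (ε / ((d : ℝ) + 1) * n) := by
    calc ∑ j : Fin d, |(Φ n x - Φ n y) j| ≤ ∑ _j : Fin d, ε / ((d : ℝ) + 1) * n :=
        Finset.sum_le_sum fun j _ => h2 j
    _ = (d : ℝ) * (ε / ((d : ℝ) + 1) * n) := by
        rw [Finset.sum_const, Finset.card_univ, Fintype.card_fin, nsmul_eq_mul]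
  have h4 : (d : ℝ) * (ε / ((d : ℝ) + 1) * n) ≤ ε * n := by
    have hq : ((d : ℝ) + 1) * (ε / ((d : ℝ) + 1)) = ε := mul_div_cancel₀ ε hd.ne'
    have hn0 : (0:ℝ) ≤ (n : ℝ) := Nat.cast_nonneg n
    nlinarith [mul_nonneg hε'.le hn0]
  linarith


theorem statement2' {d : ℕ} {Φ : ℕ → Subshift A → EuclideanSpace ℝ (Fin d)} {C : Fin d → ℝ}
    (hΦ : AlmostAdditiveVec A Φ C) (C₁ C₂ : ℝ) (hC₁ : 0 < C₁) (hC₁₂ : C₁ ≤ C₂) :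
    Tendsto (fun n : ℕ =>
        sSup {r : ℝ | ∃ l : ℕ, C₁ * n ≤ (l : ℝ) ∧ (l : ℝ) ≤ C₂ * n ∧ r = varN A (Φ l) l}
          / n) atTop (𝓝 0) ∧
    Tendsto (fun n : ℕ => varN A (Φ n) n / n) atTop (𝓝 0) := by
  have hC₂ : 0 < C₂ := lt_of_lt_of_le hC₁ hC₁₂
  constructor
  · rw [Metric.tendsto_atTop]
    intro ε hε
    have hε' : 0 < ε / (2 * (C₂ + 1)) := by positivity
    obtain ⟨N, hN⟩ := vec_est hΦ hε'
    obtain ⟨N', hN'⟩ := exists_nat_ge ((N : ℝ) / C₁)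
    refine ⟨max N' 1, fun n hn => ?_⟩
    have hn1 : 1 ≤ n := le_trans (le_max_right _ _) hn
    have hnR : (1 : ℝ) ≤ (n : ℝ) := by exact_mod_cast hn1
    have hnpos : (0 : ℝ) < (n : ℝ) := by linarith
    have hnN' : (N' : ℝ) ≤ (n : ℝ) := by
      exact_mod_cast le_trans (le_max_left _ _) hn
    have hC1n : (N : ℝ) ≤ C₁ * n := by
      rw [div_le_iff₀ hC₁] at hN'
      nlinarith
    set s : Set ℝ :=
      {r : ℝ | ∃ l : ℕ, C₁ * n ≤ (l : ℝ) ∧ (l : ℝ) ≤ C₂ * n ∧ r = varN A (Φ l) l} with hs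
    have hub : sSup s ≤ ε / (2 * (C₂ + 1)) * (C₂ * n) := by
      refine Real.sSup_le (fun r hr => ?_) (by positivity)
      obtain ⟨l, hl1, hl2, rfl⟩ := hr
      have hlN : N ≤ l := by
        have : (N : ℝ) ≤ (l : ℝ) := le_trans hC1n hl1
        exact_mod_cast this
      calc varN A (Φ l) l ≤ ε / (2 * (C₂ + 1)) * l := hN l hlN
      _ ≤ ε / (2 * (C₂ + 1)) * (C₂ * n) := by nlinarith
    have hlb : 0 ≤ sSup s := by
      refine Real.sSup_nonneg fun r hr => ?_
      obtain ⟨l, -, -, rfl⟩ := hr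
      exact varN_nonneg _ _
    rw [Real.dist_eq, sub_zero, abs_of_nonneg (div_nonneg hlb hnpos.le)]
    rw [div_lt_iff₀ hnpos]
    have hkey : ε / (2 * (C₂ + 1)) * C₂ < ε := by
      rw [div_mul_eq_mul_div, div_lt_iff₀ (by positivity)]
      nlinarith
    calc sSup s ≤ ε / (2 * (C₂ + 1)) * (C₂ * n) := hub
    _ = (ε / (2 * (C₂ + 1)) * C₂) * n := by ring
    _ < ε * n := by nlinarith
  · rw [Metric.tendsto_atTop]
    intro ε hε
    obtain ⟨N, hN⟩ := vec_est hΦ (show (0:ℝ) < ε / 2 by linarith)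
    refine ⟨max N 1, fun n hn => ?_⟩
    have hn1 : 1 ≤ n := le_trans (le_max_right _ _) hn
    have hnR : (1 : ℝ) ≤ (n : ℝ) := by exact_mod_cast hn1
    have hnpos : (0 : ℝ) < (n : ℝ) := by linarith
    have hg : varN A (Φ n) n ≤ ε / 2 * n := hN n (le_trans (le_max_left _ _) hn)
    have hg0 : 0 ≤ varN A (Φ n) n := varN_nonneg _ _
    rw [Real.dist_eq, sub_zero, abs_of_nonneg (div_nonneg hg0 hnpos.le), div_lt_iff₀ hnpos]
    nlinarith


/-- For an almost additive `Φ ∈ C_aa(Σ_A,T,d)` and constants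
`0 < C₁ ≤ C₂`, the quantity `‖Φ‖_n^⋆ = max {‖Φ‖_l : C₁ n ≤ l ≤ C₂ n}` satisfies
`‖Φ‖_n^⋆ / n → 0`; in particular `‖Φ‖_n / n → 0`. -/
theorem statement2 {m d : ℕ} (hm : 0 < m) (A : Matrix (Fin m) (Fin m) ℕ) (hA : Mixing A)
    (Φ : ℕ → Subshift A → EuclideanSpace ℝ (Fin d)) (C : Fin d → ℝ)
    (hΦ : AlmostAdditiveVec A Φ C) (C₁ C₂ : ℝ) (hC₁ : 0 < C₁) (hC₁₂ : C₁ ≤ C₂) :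
    Tendsto (fun n : ℕ =>
        sSup {r : ℝ | ∃ l : ℕ, C₁ * n ≤ (l : ℝ) ∧ (l : ℝ) ≤ C₂ * n ∧ r = varN A (Φ l) l}
          / n) atTop (𝓝 0) ∧
    Tendsto (fun n : ℕ => varN A (Φ n) n / n) atTop (𝓝 0) := by
  exact statement2' hΦ C₁ C₂ hC₁ hC₁₂
end AlmostAdditivePaper
end

section
/- Let (Σ_A, T) be a topologically mixing subshift of finite type over the alphabet {1,…,m} and Ψ ∈ C_aa^−(Σ_A,T). Then the limit D(Ψ) := lim_{n→∞} (log #B_n(Ψ))/n exists, and D(Ψ) ≤ (1 + 1/|Ψ_max|)·log m. -/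
open Filter Topology MeasureTheory Set
open scoped ENNReal NNReal

namespace AlmostAdditivePaper

variable {m : ℕ}

variable {E : Type*} [NormedAddCommGroup E] [NormedSpace ℝ E]

/-! ### part 1: words and cylinders -/

section Part1

variable (A : Matrix (Fin m) (Fin m) ℕ)

lemma wordPrefix_length (x : Subshift A) (n : ℕ) : (wordPrefix x n).length = n :=
  List.length_ofFn

lemma wordPrefix_get (x : Subshift A) (n : ℕ) (i : ℕ) (h : i < (wordPrefix x n).length) :
    (wordPrefix x n).get ⟨i, h⟩ = x.1 i := by
  simp [wordPrefix]

lemma mem_cyl_iff (x : Subshift A) (w : List (Fin m)) :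
    x ∈ cyl A w ↔ ∀ i : ℕ, (h : i < w.length) → x.1 i = w.get ⟨i, h⟩ := by
  constructor
  · intro hx i h; exact hx ⟨i, h⟩
  · intro hx i; exact hx i.1 i.2

lemma mem_cyl_wordPrefix (x : Subshift A) (n : ℕ) : x ∈ cyl A (wordPrefix x n) := by
  rw [mem_cyl_iff]
  intro i h
  rw [wordPrefix_get]

lemma eq_wordPrefix_of_mem_cyl {x : Subshift A} {w : List (Fin m)} (hx : x ∈ cyl A w) :
    w = wordPrefix x w.length := by
  apply List.ext_get (by rw [wordPrefix_length])
  intro i h1 h2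
  rw [wordPrefix_get, (mem_cyl_iff A x w).1 hx i h1]

lemma wordPrefix_zero (x : Subshift A) : wordPrefix x 0 = [] := rfl

lemma take_wordPrefix (x : Subshift A) {k l : ℕ} (h : k ≤ l) :
    (wordPrefix x l).take k = wordPrefix x k := by
  apply List.ext_get
  · rw [List.length_take, wordPrefix_length, wordPrefix_length]; omega
  · intro i h1 h2
    rw [List.get_eq_getElem, List.getElem_take, wordPrefix_get]
    exact wordPrefix_get A x l i (by rw [wordPrefix_length] at h2 ⊢; omega)

lemma cyl_wordPrefix_antitone (x : Subshift A) {k l : ℕ} (h : k ≤ l) :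
    cyl A (wordPrefix x l) ⊆ cyl A (wordPrefix x k) := by
  intro y hy
  rw [mem_cyl_iff] at hy ⊢
  intro i hi
  rw [wordPrefix_length] at hi
  have := hy i (by rw [wordPrefix_length]; omega)
  rwa [wordPrefix_get, ← wordPrefix_get A x k i (by rw [wordPrefix_length]; omega)] at this

lemma adm_wordPrefix (x : Subshift A) (n : ℕ) : AdmWord A (wordPrefix x n) := by
  intro i h
  rw [wordPrefix_get, wordPrefix_get]
  exact x.2 i

lemma shiftT_iter_apply (x : Subshift A) (k i : ℕ) :
    ((shiftT A)^[k] x).1 i = x.1 (i + k) := by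
  induction k generalizing x with
  | zero => rfl
  | succ k ih =>
    rw [Function.iterate_succ_apply, ih]
    show x.1 (i + k + 1) = x.1 (i + (k + 1))
    congr 1

lemma mem_cyl_append {x : Subshift A} {u z : List (Fin m)} (hx : x ∈ cyl A (u ++ z)) :
    x ∈ cyl A u ∧ (shiftT A)^[u.length] x ∈ cyl A z := by
  rw [mem_cyl_iff] at hx
  constructor
  · rw [mem_cyl_iff]
    intro i h
    have h2 : i < (u ++ z).length := by rw [List.length_append]; omega
    have := hx i h2
    simpa [List.getElem_append_left h] using this
  · rw [mem_cyl_iff]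
    intro i h
    have h2 : u.length + i < (u ++ z).length := by rw [List.length_append]; omega
    have h3 := hx (u.length + i) h2
    have h4 : (u ++ z).get ⟨u.length + i, h2⟩ = z.get ⟨i, h⟩ := by
      simp only [List.get_eq_getElem]
      rw [List.getElem_append_right (by omega)]
      congr 1
      omega
    rw [shiftT_iter_apply, Nat.add_comm i u.length, h3, h4]

end Part1

variable {A : Matrix (Fin m) (Fin m) ℕ}

/-- every letter has an admissible successor -/
lemma exists_next (hA : Mixing A) (c : Fin m) : ∃ d, A c d = 1 := by
  obtain ⟨h01, p₀, hp₀, hpos⟩ := hA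
  have hm : 0 < m := by
    rcases Nat.eq_zero_or_pos m with h | h
    · exact absurd c.2 (by omega)
    · exact h
  have hpow := hpos c c
  -- A ^ p₀ = A * A ^ (p₀ - 1)
  have hp : A ^ p₀ = A * A ^ (p₀ - 1) := by
    conv_lhs => rw [show p₀ = 1 + (p₀ - 1) by omega]
    rw [pow_add, pow_one]
  rw [hp, Matrix.mul_apply] at hpow
  obtain ⟨d, hdmem, hd⟩ := Finset.exists_ne_zero_of_sum_ne_zero hpow.ne'
  have h1 : A c d ≠ 0 := fun h => by simp [h] at hd
  rcases h01 c d with h | h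
  · exact absurd h h1
  · exact ⟨d, h⟩

open Classical in
/-- extension of an admissible word to a point of the subshift -/
lemma extend_word (hA : Mixing A) (hm : 0 < m) (w : List (Fin m)) (hw : AdmWord A w) :
    ∃ x : Subshift A, x ∈ cyl A w := by
  classical
  set succ : Fin m → Fin m := fun c => Classical.choose (exists_next hA c) with hsucc
  have hsuccspec : ∀ c, A c (succ c) = 1 := fun c => Classical.choose_spec (exists_next hA c)
  set c0 : Fin m := if h : 0 < w.length then w.get ⟨0, h⟩ else ⟨0, hm⟩ with hc0
  set F : ℕ → Fin m := fun i => Nat.rec c0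
    (fun i prev => if h : i + 1 < w.length then w.get ⟨i + 1, h⟩ else succ prev) i with hF
  have hFsucc : ∀ i, F (i + 1) =
      if h : i + 1 < w.length then w.get ⟨i + 1, h⟩ else succ (F i) := fun i => rfl
  have hFw : ∀ i, (h : i < w.length) → F i = w.get ⟨i, h⟩ := by
    intro i
    induction i with
    | zero => intro h; simp only [hF, hc0]; rw [dif_pos h]; rfl
    | succ i ih => intro h; rw [hFsucc, dif_pos h]
  have hadj : ∀ i, A (F i) (F (i + 1)) = 1 := by
    intro i
    rw [hFsucc]
    by_cases h : i + 1 < w.length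
    · rw [dif_pos h, hFw i (by omega)]
      exact hw i h
    · rw [dif_neg h]
      exact hsuccspec (F i)
  refine ⟨⟨F, hadj⟩, ?_⟩
  intro i
  exact hFw i.1 i.2

lemma subshift_nonempty (hA : Mixing A) (hm : 0 < m) : Nonempty (Subshift A) := by
  obtain ⟨x, -⟩ := extend_word hA hm [] (fun i h => by simp at h)
  exact ⟨x⟩

/-! ### part 2 : wordSup -/

section Part2

variable (Ψ : ℕ → Subshift A → ℝ) (CΨ : ℝ)
variable (hΨ : AlmostAdditive A Ψ CΨ) (hneg : PhiMax A Ψ CΨ < 0)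

section
include hΨ hneg

lemma bddAbove_psi1 : BddAbove (Set.range (Ψ 1)) := by
  by_contra h
  have := Real.sSup_of_not_bddAbove h
  rw [PhiMax, this] at hneg
  linarith [hΨ.posC]

lemma psi1_le (x : Subshift A) : Ψ 1 x ≤ PhiMax A Ψ CΨ - CΨ := by
  have := le_csSup (bddAbove_psi1 Ψ CΨ hΨ hneg) (Set.mem_range_self (f := Ψ 1) x)
  rw [PhiMax]; linarith

/-- pointwise exponential decay -/
lemma psi_le (j : ℕ) (x : Subshift A) : Ψ j x ≤ j * PhiMax A Ψ CΨ := by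
  induction j generalizing x with
  | zero => rw [hΨ.zero x]; simp
  | succ j ih =>
    have h1 := hΨ.upper j 1 x
    have h2 := psi1_le Ψ CΨ hΨ hneg ((shiftT A)^[j] x)
    have h3 := ih x
    push_cast
    nlinarith [hΨ.posC]

lemma psi_nonpos (j : ℕ) (x : Subshift A) : Ψ j x ≤ 0 := by
  have := psi_le Ψ CΨ hΨ hneg j x
  nlinarith [(Nat.cast_nonneg j : (0:ℝ) ≤ (j:ℝ)), hneg]

lemma bddAbove_wordSup_set (w : List (Fin m)) :
    BddAbove ((fun x => Real.exp (Ψ w.length x)) '' cyl A w) := by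
  refine ⟨1, ?_⟩
  rintro r ⟨x, -, rfl⟩
  simpa using Real.exp_le_exp.2 (psi_nonpos Ψ CΨ hΨ hneg w.length x)

lemma le_wordSup {w : List (Fin m)} {x : Subshift A} (hx : x ∈ cyl A w) :
    Real.exp (Ψ w.length x) ≤ wordSup A Ψ w :=
  le_csSup (bddAbove_wordSup_set Ψ CΨ hΨ hneg w) ⟨x, hx, rfl⟩

lemma wordSup_pos {w : List (Fin m)} {x : Subshift A} (hx : x ∈ cyl A w) :
    0 < wordSup A Ψ w :=
  lt_of_lt_of_le (Real.exp_pos _) (le_wordSup Ψ CΨ hΨ hneg hx)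

lemma wordSup_le_exp (w : List (Fin m)) :
    wordSup A Ψ w ≤ Real.exp (w.length * PhiMax A Ψ CΨ) := by
  rcases Set.eq_empty_or_nonempty (cyl A w) with h | ⟨x, hx⟩
  · rw [wordSup, h, Set.image_empty, Real.sSup_empty]
    positivity
  · refine csSup_le ⟨Real.exp (Ψ w.length x), ⟨x, hx, rfl⟩⟩ ?_
    rintro r ⟨y, -, rfl⟩
    exact Real.exp_le_exp.2 (psi_le Ψ CΨ hΨ hneg w.length y)

end

lemma wordSup_nonneg (w : List (Fin m)) : 0 ≤ wordSup A Ψ w := by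
  apply Real.sSup_nonneg
  rintro r ⟨y, -, rfl⟩
  positivity

lemma nonempty_cyl_of_wordSup_pos {w : List (Fin m)} (h : 0 < wordSup A Ψ w) :
    ∃ x, x ∈ cyl A w := by
  by_contra hc
  push_neg at hc
  have : cyl A w = ∅ := Set.eq_empty_iff_forall_notMem.2 hc
  rw [wordSup, this, Set.image_empty, Real.sSup_empty] at h
  exact lt_irrefl _ h

lemma wordSup_nil (hA : Mixing A) (hm : 0 < m) (hΨ : AlmostAdditive A Ψ CΨ) :
    wordSup A Ψ [] = 1 := by
  obtain ⟨x⟩ := subshift_nonempty hA hm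
  have hcyl : cyl A ([] : List (Fin m)) = Set.univ := by
    ext y; constructor
    · intro _; trivial
    · intro _ i; exact absurd i.2 (by simp)
  have : (fun x => Real.exp (Ψ (0:ℕ) x)) '' (Set.univ : Set (Subshift A)) = {1} := by
    ext r
    simp only [Set.image_univ, Set.mem_range, Set.mem_singleton_iff]
    constructor
    · rintro ⟨y, rfl⟩; rw [hΨ.zero y, Real.exp_zero]
    · rintro rfl; exact ⟨x, by rw [hΨ.zero x, Real.exp_zero]⟩
  rw [wordSup, List.length_nil, hcyl, this, csSup_singleton]

end Part2

/-! ### part 3 : splitting, monotonicity, ball structure -/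

section Part3

variable (Ψ : ℕ → Subshift A → ℝ) (CΨ : ℝ)
variable (hΨ : AlmostAdditive A Ψ CΨ) (hneg : PhiMax A Ψ CΨ < 0)
include hΨ hneg

lemma wordSup_split (u z : List (Fin m)) :
    wordSup A Ψ (u ++ z) ≤ Real.exp CΨ * wordSup A Ψ u * wordSup A Ψ z := by
  rcases Set.eq_empty_or_nonempty (cyl A (u ++ z)) with h | ⟨x, hx⟩
  · rw [wordSup, h, Set.image_empty, Real.sSup_empty]
    have h1 := wordSup_nonneg Ψ u
    have h2 := wordSup_nonneg Ψ z
    positivity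
  · refine csSup_le ⟨_, ⟨x, hx, rfl⟩⟩ ?_
    rintro r ⟨y, hy, rfl⟩
    obtain ⟨hyu, hyz⟩ := mem_cyl_append A hy
    have hlen : (u ++ z).length = u.length + z.length := List.length_append
    have h1 := hΨ.upper u.length z.length y
    have h2 := le_wordSup Ψ CΨ hΨ hneg hyu
    have h3 := le_wordSup Ψ CΨ hΨ hneg hyz
    calc Real.exp (Ψ (u ++ z).length y)
        ≤ Real.exp (CΨ + Ψ u.length y + Ψ z.length ((shiftT A)^[u.length] y)) := by
          apply Real.exp_le_exp.2
          rw [hlen]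
          linarith
      _ = Real.exp CΨ * Real.exp (Ψ u.length y) *
            Real.exp (Ψ z.length ((shiftT A)^[u.length] y)) := by
          rw [← Real.exp_add, ← Real.exp_add]
      _ ≤ Real.exp CΨ * wordSup A Ψ u * wordSup A Ψ z := by
          have e1 : (0:ℝ) < Real.exp (Ψ u.length y) := Real.exp_pos _
          have e2 : (0:ℝ) < Real.exp (Ψ z.length ((shiftT A)^[u.length] y)) := Real.exp_pos _
          have e3 : (0:ℝ) < Real.exp CΨ := Real.exp_pos _
          have e4 : Real.exp CΨ * Real.exp (Ψ u.length y) ≤ Real.exp CΨ * wordSup A Ψ u :=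
            mul_le_mul_of_nonneg_left h2 e3.le
          have e5 : (0:ℝ) ≤ Real.exp CΨ * wordSup A Ψ u := by
            have := wordSup_nonneg Ψ u
            positivity
          exact mul_le_mul e4 h3 e2.le e5

lemma wordSup_prefix_le_exp (x : Subshift A) (j : ℕ) :
    wordSup A Ψ (wordPrefix x j) ≤ Real.exp (j * PhiMax A Ψ CΨ) := by
  have := wordSup_le_exp Ψ CΨ hΨ hneg (wordPrefix x j)
  rwa [wordPrefix_length] at this

lemma le_wordSup_prefix {x y : Subshift A} {j : ℕ} (hy : y ∈ cyl A (wordPrefix x j)) :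
    Real.exp (Ψ j y) ≤ wordSup A Ψ (wordPrefix x j) := by
  have := le_wordSup Ψ CΨ hΨ hneg hy
  rwa [wordPrefix_length] at this

lemma wordSup_prefix_succ_le (x : Subshift A) (j : ℕ) :
    wordSup A Ψ (wordPrefix x (j + 1)) ≤
      Real.exp (PhiMax A Ψ CΨ) * wordSup A Ψ (wordPrefix x j) := by
  have hne : x ∈ cyl A (wordPrefix x (j + 1)) := mem_cyl_wordPrefix A x (j + 1)
  rw [wordSup, wordPrefix_length]
  refine csSup_le ⟨_, ⟨x, hne, rfl⟩⟩ ?_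
  rintro r ⟨y, hy, rfl⟩
  have hyj : y ∈ cyl A (wordPrefix x j) := cyl_wordPrefix_antitone A x (Nat.le_succ j) hy
  have h1 := hΨ.upper j 1 y
  have h2 := psi1_le Ψ CΨ hΨ hneg ((shiftT A)^[j] y)
  have h3 := le_wordSup_prefix Ψ CΨ hΨ hneg hyj
  calc Real.exp (Ψ (j + 1) y) ≤ Real.exp (PhiMax A Ψ CΨ + Ψ j y) := by
        apply Real.exp_le_exp.2; rw [PhiMax] at h2 ⊢; push_cast at *; linarith
    _ = Real.exp (PhiMax A Ψ CΨ) * Real.exp (Ψ j y) := by rw [← Real.exp_add]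
    _ ≤ Real.exp (PhiMax A Ψ CΨ) * wordSup A Ψ (wordPrefix x j) := by
        have := Real.exp_pos (PhiMax A Ψ CΨ)
        nlinarith

lemma wordSup_prefix_antitone (x : Subshift A) {i j : ℕ} (hij : i ≤ j) :
    wordSup A Ψ (wordPrefix x j) ≤ wordSup A Ψ (wordPrefix x i) := by
  induction j, hij using Nat.le_induction with
  | base => exact le_rfl
  | succ j hij ih =>
    have h1 := wordSup_prefix_succ_le Ψ CΨ hΨ hneg x j
    have h2 : Real.exp (PhiMax A Ψ CΨ) ≤ 1 := by
      rw [show (1:ℝ) = Real.exp 0 by rw [Real.exp_zero]]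
      exact Real.exp_le_exp.2 (le_of_lt hneg)
    have h3 := wordSup_nonneg Ψ (wordPrefix x j)
    nlinarith

end Part3

section Part4

variable (Ψ : ℕ → Subshift A → ℝ) (CΨ : ℝ)

lemma dPsi_self (x : Subshift A) : dPsi A Ψ x x = 0 := by
  unfold dPsi
  rw [dif_pos rfl]

lemma dPsi_eq_of_ne {x y : Subshift A} (hxy : ¬ (x = y)) :
    ∃ D : ℕ, x.1 D ≠ y.1 D ∧ (∀ i, i < D → x.1 i = y.1 i) ∧
      dPsi A Ψ x y = wordSup A Ψ (wordPrefix x D) := by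
  have hex : ∃ n, x.1 n ≠ y.1 n := by
    by_contra hc
    push_neg at hc
    exact hxy (Subtype.ext (funext hc))
  refine ⟨Nat.find hex, Nat.find_spec hex,
    fun i hi => not_ne_iff.1 (Nat.find_min hex hi), ?_⟩
  unfold dPsi
  rw [dif_neg hxy]

variable (hΨ : AlmostAdditive A Ψ CΨ) (hneg : PhiMax A Ψ CΨ < 0)
include hΨ hneg

lemma ballD_eq_cyl (x : Subshift A) {t : ℝ} {k : ℕ}
    (hk1 : wordSup A Ψ (wordPrefix x k) ≤ Real.exp (-t))
    (hk2 : ∀ j, j < k → Real.exp (-t) < wordSup A Ψ (wordPrefix x j)) :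
    ballD A Ψ x (Real.exp (-t)) = cyl A (wordPrefix x k) := by
  ext y
  constructor
  · intro hy
    by_cases hxy : x = y
    · subst hxy; exact mem_cyl_wordPrefix A x k
    · obtain ⟨D, hD1, hD2, hD3⟩ := dPsi_eq_of_ne Ψ (x := x) (y := y) hxy
      have hball : dPsi A Ψ x y ≤ Real.exp (-t) := hy
      rw [hD3] at hball
      have hkD : k ≤ D := by
        by_contra hc
        push_neg at hc
        exact absurd hball (not_le.2 (hk2 D hc))
      rw [mem_cyl_iff]
      intro i hi
      rw [wordPrefix_length] at hi
      rw [wordPrefix_get, ← hD2 i (by omega)]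
  · intro hy
    by_cases hxy : x = y
    · subst hxy
      show dPsi A Ψ x x ≤ _
      rw [dPsi_self]
      positivity
    · obtain ⟨D, hD1, hD2, hD3⟩ := dPsi_eq_of_ne Ψ (x := x) (y := y) hxy
      have hkD : k ≤ D := by
        by_contra hc
        push_neg at hc
        have := (mem_cyl_iff A y (wordPrefix x k)).1 hy D (by rw [wordPrefix_length]; omega)
        rw [wordPrefix_get] at this
        exact hD1 this.symm
      show dPsi A Ψ x y ≤ _
      rw [hD3]
      exact le_trans (wordSup_prefix_antitone Ψ CΨ hΨ hneg x hkD) hk1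

/-- existence of the stopping scale -/
lemma exists_stop (hA : Mixing A) (hm : 0 < m) (x : Subshift A) {t : ℝ} (ht : 0 < t) :
    ∃ k : ℕ, 0 < k ∧ ((k : ℝ) - 1) * (-(PhiMax A Ψ CΨ)) < t ∧
      wordSup A Ψ (wordPrefix x k) ≤ Real.exp (-t) ∧
      (∀ j, j < k → Real.exp (-t) < wordSup A Ψ (wordPrefix x j)) ∧
      ballD A Ψ x (Real.exp (-t)) = cyl A (wordPrefix x k) := by
  have ha : 0 < -(PhiMax A Ψ CΨ) := by linarith
  have hex : ∃ j : ℕ, wordSup A Ψ (wordPrefix x j) ≤ Real.exp (-t) := by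
    refine ⟨Nat.ceil (t / (-(PhiMax A Ψ CΨ))), ?_⟩
    refine le_trans (wordSup_prefix_le_exp Ψ CΨ hΨ hneg x _) (Real.exp_le_exp.2 ?_)
    have h1 : t / (-(PhiMax A Ψ CΨ)) ≤ (Nat.ceil (t / (-(PhiMax A Ψ CΨ))) : ℝ) :=
      Nat.le_ceil _
    rw [div_le_iff₀ ha] at h1
    nlinarith
  classical
  set k := Nat.find hex with hk
  have hks : wordSup A Ψ (wordPrefix x k) ≤ Real.exp (-t) := Nat.find_spec hex
  have hkm : ∀ j, j < k → Real.exp (-t) < wordSup A Ψ (wordPrefix x j) :=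
    fun j hj => not_le.1 (Nat.find_min hex hj)
  have hk0 : 0 < k := by
    rcases Nat.eq_zero_or_pos k with h | h
    · exfalso
      have := hks
      rw [h, wordPrefix_zero, wordSup_nil Ψ CΨ hA hm hΨ] at this
      have h2 : Real.exp (-t) < 1 := by
        rw [show (1:ℝ) = Real.exp 0 by rw [Real.exp_zero]]
        exact Real.exp_lt_exp.2 (by linarith)
      linarith
    · exact h
  refine ⟨k, hk0, ?_, hks, hkm, ballD_eq_cyl Ψ CΨ hΨ hneg x hks hkm⟩
  have h1 := hkm (k - 1) (by omega)
  have h2 := wordSup_prefix_le_exp Ψ CΨ hΨ hneg x (k - 1)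
  have h3 : Real.exp (-t) < Real.exp (((k:ℝ) - 1) * PhiMax A Ψ CΨ) := by
    have : ((k - 1 : ℕ) : ℝ) = (k : ℝ) - 1 := by
      push_cast [Nat.cast_sub (by omega : 1 ≤ k)]
      ring
    rw [← this]
    exact lt_of_lt_of_le h1 h2
  have h4 := Real.exp_lt_exp.1 h3
  nlinarith

end Part4

/-! ### part 5 : the counting sets -/

def Mset (A : Matrix (Fin m) (Fin m) ℕ) (Ψ : ℕ → Subshift A → ℝ) (t : ℝ) :
    Set (List (Fin m)) :=
  {w | Real.exp (-t) < wordSup A Ψ w}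

section Part5

variable (Ψ : ℕ → Subshift A → ℝ) (CΨ : ℝ)

lemma wordPrefix_succ (x : Subshift A) (j : ℕ) :
    wordPrefix x (j + 1) = wordPrefix x j ++ [x.1 j] := by
  rw [wordPrefix, List.ofFn_succ', List.concat_eq_append]
  rfl

lemma Mset_mono {t t' : ℝ} (h : t ≤ t') : Mset A Ψ t ⊆ Mset A Ψ t' := by
  intro w hw
  exact lt_of_le_of_lt (Real.exp_le_exp.2 (by linarith)) hw

variable (hΨ : AlmostAdditive A Ψ CΨ) (hneg : PhiMax A Ψ CΨ < 0)
include hΨ hneg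

lemma Mset_length_lt {t : ℝ} {w : List (Fin m)} (hw : w ∈ Mset A Ψ t) :
    (w.length : ℝ) * (-(PhiMax A Ψ CΨ)) < t := by
  have h1 : Real.exp (-t) < Real.exp (w.length * PhiMax A Ψ CΨ) :=
    lt_of_lt_of_le hw (wordSup_le_exp Ψ CΨ hΨ hneg w)
  have := Real.exp_lt_exp.1 h1
  nlinarith

lemma Mset_finite (t : ℝ) : (Mset A Ψ t).Finite := by
  apply Set.Finite.subset (List.finite_length_le (Fin m) (Nat.ceil (t / (-(PhiMax A Ψ CΨ)))))
  intro w hw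
  have h1 := Mset_length_lt Ψ CΨ hΨ hneg hw
  have ha : (0:ℝ) < -(PhiMax A Ψ CΨ) := by linarith
  have h2 : (w.length : ℝ) < t / (-(PhiMax A Ψ CΨ)) := by
    rw [lt_div_iff₀ ha]; linarith
  have h3 : (w.length : ℝ) ≤ (Nat.ceil (t / (-(PhiMax A Ψ CΨ))) : ℝ) :=
    le_trans h2.le (Nat.le_ceil _)
  exact_mod_cast h3

lemma nil_mem_Mset (hA : Mixing A) (hm : 0 < m) {t : ℝ} (ht : 0 < t) :
    [] ∈ Mset A Ψ t := by
  show Real.exp (-t) < wordSup A Ψ []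
  rw [wordSup_nil Ψ CΨ hA hm hΨ]
  rw [show (1:ℝ) = Real.exp 0 by rw [Real.exp_zero]]
  exact Real.exp_lt_exp.2 (by linarith)

/-- the decomposition of a word of `Mset (t+s)` -/
lemma split_decomp (hA : Mixing A) (hm : 0 < m) {t s : ℝ} (ht : 0 < t)
    {w : List (Fin m)} (hw : w ∈ Mset A Ψ (t + s)) :
    w ∈ Mset A Ψ t ∨ ∃ p : List (Fin m), ∃ c : Fin m, ∃ z : List (Fin m),
      p ∈ Mset A Ψ t ∧ z ∈ Mset A Ψ (s + CΨ) ∧ w = (p ++ [c]) ++ z := by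
  by_cases hcase : Real.exp (-t) < wordSup A Ψ w
  · exact Or.inl hcase
  right
  push_neg at hcase
  have hwpos : 0 < wordSup A Ψ w := lt_trans (Real.exp_pos _) hw
  obtain ⟨x, hx⟩ := nonempty_cyl_of_wordSup_pos Ψ hwpos
  have hwx : w = wordPrefix x w.length := eq_wordPrefix_of_mem_cyl A hx
  classical
  have hex : ∃ j : ℕ, wordSup A Ψ (wordPrefix x j) ≤ Real.exp (-t) := by
    exact ⟨w.length, by rw [← hwx]; exact hcase⟩
  set k := Nat.find hex with hkdef
  have hks : wordSup A Ψ (wordPrefix x k) ≤ Real.exp (-t) := Nat.find_spec hex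
  have hkm : ∀ j, j < k → Real.exp (-t) < wordSup A Ψ (wordPrefix x j) :=
    fun j hj => not_le.1 (Nat.find_min hex hj)
  have hk0 : 0 < k := by
    rcases Nat.eq_zero_or_pos k with h | h
    · exfalso
      have h2 := hks
      rw [h, wordPrefix_zero, wordSup_nil Ψ CΨ hA hm hΨ] at h2
      have h3 : Real.exp (-t) < 1 := by
        rw [show (1:ℝ) = Real.exp 0 by rw [Real.exp_zero]]
        exact Real.exp_lt_exp.2 (by linarith)
      linarith
    · exact h
  have hkw : k ≤ w.length := Nat.find_le (by rw [← hwx]; exact hcase)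
  refine ⟨wordPrefix x (k - 1), x.1 (k - 1), w.drop k, hkm (k - 1) (by omega), ?_, ?_⟩
  · -- z ∈ Mset (s + CΨ)
    have hsplit := wordSup_split Ψ CΨ hΨ hneg (wordPrefix x k) (w.drop k)
    have htake : List.take k w = wordPrefix x k := by
      apply List.ext_get
      · rw [List.length_take, wordPrefix_length]; omega
      · intro i h1 h2
        rw [List.get_eq_getElem, List.getElem_take, wordPrefix_get]
        exact ((mem_cyl_iff A x w).1 hx i (by rw [List.length_take] at h1; omega)).symm
    have happ : wordPrefix x k ++ w.drop k = w := by
      rw [← htake]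
      exact List.take_append_drop k w
    rw [happ] at hsplit
    have hzpos : 0 ≤ wordSup A Ψ (w.drop k) := wordSup_nonneg Ψ _
    have h5 : Real.exp (-(t + s)) < Real.exp CΨ * Real.exp (-t) * wordSup A Ψ (w.drop k) := by
      have h6 : Real.exp CΨ * wordSup A Ψ (wordPrefix x k) * wordSup A Ψ (w.drop k) ≤
          Real.exp CΨ * Real.exp (-t) * wordSup A Ψ (w.drop k) :=
        mul_le_mul_of_nonneg_right
          (mul_le_mul_of_nonneg_left hks (Real.exp_pos CΨ).le) hzpos
      exact lt_of_lt_of_le (lt_of_lt_of_le hw hsplit) h6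
    show Real.exp (-(s + CΨ)) < wordSup A Ψ (w.drop k)
    have h7 : Real.exp CΨ * Real.exp (-t) = Real.exp (CΨ - t) := by
      rw [← Real.exp_add]; ring_nf
    rw [h7] at h5
    have h8 : Real.exp (-(t + s)) / Real.exp (CΨ - t) < wordSup A Ψ (w.drop k) := by
      rw [div_lt_iff₀ (Real.exp_pos _)]
      linarith [mul_comm (Real.exp (CΨ - t)) (wordSup A Ψ (w.drop k))]
    have h9 : Real.exp (-(t + s)) / Real.exp (CΨ - t) = Real.exp (-(s + CΨ)) := by
      rw [← Real.exp_sub]; ring_nf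
    rwa [h9] at h8
  · -- w = (p ++ [c]) ++ z
    have h10 : wordPrefix x (k - 1) ++ [x.1 (k - 1)] = wordPrefix x k := by
      rw [← wordPrefix_succ]
      congr 1
      omega
    have htake : List.take k w = wordPrefix x k := by
      apply List.ext_get
      · rw [List.length_take, wordPrefix_length]; omega
      · intro i h1 h2
        rw [List.get_eq_getElem, List.getElem_take, wordPrefix_get]
        exact ((mem_cyl_iff A x w).1 hx i (by rw [List.length_take] at h1; omega)).symm
    rw [h10, ← htake]
    exact (List.take_append_drop k w).symm

/-- the key submultiplicativity estimate -/
lemma Mcard_split (hA : Mixing A) (hm : 0 < m) {t s : ℝ} (ht : 0 < t) (hs : 0 < s) :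
    Nat.card (Mset A Ψ (t + s)) ≤
      Nat.card (Mset A Ψ t) * ((m + 1) * Nat.card (Mset A Ψ (s + CΨ))) := by
  classical
  haveI f1 : Finite ↥(Mset A Ψ t) := (Mset_finite Ψ CΨ hΨ hneg t).to_subtype
  haveI f2 : Finite ↥(Mset A Ψ (s + CΨ)) := (Mset_finite Ψ CΨ hΨ hneg (s + CΨ)).to_subtype
  have hsC : 0 < s + CΨ := by linarith [hΨ.posC]
  have hdec : ∀ w : ↥(Mset A Ψ (t + s)), ∃ (p : ↥(Mset A Ψ t)) (o : Option (Fin m))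
      (z : ↥(Mset A Ψ (s + CΨ))),
      w.1 = match o with | none => p.1 | some c => (p.1 ++ [c]) ++ z.1 := by
    intro w
    rcases split_decomp Ψ CΨ hΨ hneg hA hm ht w.2 with h | ⟨p, c, z, hp, hz, hw⟩
    · exact ⟨⟨w.1, h⟩, none, ⟨[], nil_mem_Mset Ψ CΨ hΨ hneg hA hm hsC⟩, rfl⟩
    · exact ⟨⟨p, hp⟩, some c, ⟨z, hz⟩, hw⟩
  choose p o z hw using hdec
  have hinj : Function.Injective
      (fun w : ↥(Mset A Ψ (t + s)) => (p w, o w, z w)) := by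
    intro w1 w2 heq
    have e1 : p w1 = p w2 := congrArg Prod.fst heq
    have e2 : o w1 = o w2 := congrArg (fun q => q.2.1) heq
    have e3 : z w1 = z w2 := congrArg (fun q => q.2.2) heq
    apply Subtype.ext
    rw [hw w1, hw w2, e1, e2, e3]
  calc Nat.card ↥(Mset A Ψ (t + s)) ≤
      Nat.card (↥(Mset A Ψ t) × Option (Fin m) × ↥(Mset A Ψ (s + CΨ))) :=
        Nat.card_le_card_of_injective _ hinj
    _ = Nat.card ↥(Mset A Ψ t) * ((m + 1) * Nat.card ↥(Mset A Ψ (s + CΨ))) := by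
        simp [Nat.card_prod, Finite.card_option]

end Part5

/-! ### part 6 : no forced cycles -/

section Part6

lemma no_forced_cycle (hA : Mixing A) (hm2 : 2 ≤ m) (x : Subshift A) {k l : ℕ}
    (hk : 1 ≤ k) (hkl : k + m + 1 ≤ l)
    (heq : cyl A (wordPrefix x k) = cyl A (wordPrefix x l)) : False := by
  have hm : 0 < m := by omega
  -- step 1: consecutive forced letters
  have hforced : ∀ j : ℕ, k ≤ j + 1 → j + 2 ≤ l → ∀ e, A (x.1 j) e = 1 → e = x.1 (j + 1) := by
    intro j hj1 hj2 e he
    have hsub : cyl A (wordPrefix x (j + 1)) ⊆ cyl A (wordPrefix x (j + 2)) := by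
      intro y hy
      have h1 : y ∈ cyl A (wordPrefix x k) := cyl_wordPrefix_antitone A x hj1 hy
      rw [heq] at h1
      exact cyl_wordPrefix_antitone A x hj2 h1
    set u : List (Fin m) := List.ofFn
      (fun i : Fin (j + 2) => if i.1 < j + 1 then x.1 i.1 else e) with hu
    have hulen : u.length = j + 2 := List.length_ofFn
    have huget : ∀ i : ℕ, (h : i < u.length) →
        u.get ⟨i, h⟩ = if i < j + 1 then x.1 i else e := by
      intro i h
      have h2 : i < j + 2 := by rwa [hulen] at h
      have h3 := List.get_ofFn
        (fun i : Fin (j + 2) => if i.1 < j + 1 then x.1 i.1 else e)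
        ⟨i, by rw [List.length_ofFn]; exact h2⟩
      exact h3
    have hadm : AdmWord A u := by
      intro i h
      simp only [huget]
      rw [hulen] at h
      by_cases hc : i + 1 < j + 1
      · rw [if_pos (by omega), if_pos hc]
        exact x.2 i
      · have hij : i = j := by omega
        rw [if_pos (by omega), if_neg (by omega), hij]
        exact he
    obtain ⟨y, hy⟩ := extend_word hA hm u hadm
    have hyx : y ∈ cyl A (wordPrefix x (j + 1)) := by
      rw [mem_cyl_iff]
      intro i hi
      rw [wordPrefix_length] at hi
      rw [wordPrefix_get]
      have h5 := (mem_cyl_iff A y u).1 hy i (by omega)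
      simp only [huget] at h5
      rwa [if_pos hi] at h5
    have hye : y.1 (j + 1) = e := by
      have h5 := (mem_cyl_iff A y u).1 hy (j + 1) (by omega)
      simp only [huget] at h5
      rwa [if_neg (by omega)] at h5
    have hyx2 := hsub hyx
    have := (mem_cyl_iff A y (wordPrefix x (j + 2))).1 hyx2 (j + 1)
      (by rw [wordPrefix_length]; omega)
    rw [wordPrefix_get] at this
    rw [← hye, this]
  -- step 2: pigeonhole gives a forced cycle, contradicting mixing
  have main : ∀ P Q : ℕ, k - 1 ≤ P → P < Q → Q ≤ k - 1 + m → x.1 P = x.1 Q → False := by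
    intro P Q hP hPQ hQ hxPQ
    set d := Q - P with hd
    have hd0 : 0 < d := by omega
    set y : ℕ → Fin m := fun i => x.1 (P + i % d) with hy
    have hyforced : ∀ i : ℕ, ∀ e, A (y i) e = 1 → e = y (i + 1) := by
      intro i e he
      have hr : i % d < d := Nat.mod_lt _ hd0
      have hpos := hforced (P + i % d) (by omega) (by omega) e he
      have hdm : (i + 1) % d = (i % d + 1) % d := by
        conv_lhs => rw [← Nat.div_add_mod i d]
        rw [Nat.add_assoc, Nat.mul_add_mod]
      rw [hpos]
      show x.1 (P + i % d + 1) = x.1 (P + (i + 1) % d)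
      by_cases hc : i % d + 1 < d
      · rw [hdm, Nat.mod_eq_of_lt hc]
        congr 1
      · have hceq : i % d + 1 = d := by omega
        rw [hdm, hceq, Nat.mod_self]
        have h6 : P + i % d + 1 = Q := by omega
        rw [h6]
        have h7 : P + 0 = P := by omega
        rw [h7, hxPQ]
    have hpow : ∀ r : ℕ, ∀ e, (A ^ r) (y 0) e ≠ 0 → e = y r := by
      intro r
      induction r with
      | zero =>
        intro e h0
        by_contra hne
        rw [pow_zero] at h0
        exact h0 (Matrix.one_apply_ne' hne)
      | succ r ih =>
        intro e h0
        rw [pow_succ, Matrix.mul_apply] at h0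
        obtain ⟨c, -, hc⟩ := Finset.exists_ne_zero_of_sum_ne_zero h0
        have h1 : (A ^ r) (y 0) c ≠ 0 := fun h => by simp [h] at hc
        have h2 : A c e ≠ 0 := fun h => by simp [h] at hc
        have h3 := ih c h1
        rcases hA.1 c e with h4 | h4
        · exact absurd h4 h2
        · exact hyforced r e (h3 ▸ h4)
    obtain ⟨h01, p₀, hp₀, hppos⟩ := hA
    have h0 : ∀ e : Fin m, e = y p₀ := fun e => hpow p₀ e (hppos (y 0) e).ne'
    have e0 := h0 ⟨0, by omega⟩
    have e1 := h0 ⟨1, by omega⟩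
    rw [← e1] at e0
    have := congrArg Fin.val e0
    simp at this
  obtain ⟨p', q', hpq', hval⟩ := Fintype.exists_ne_map_eq_of_card_lt
    (fun i : Fin (m + 1) => x.1 (k - 1 + i.1)) (by simp)
  rcases lt_or_gt_of_ne (show p'.1 ≠ q'.1 from fun h => hpq' (Fin.ext h)) with hlt | hlt
  · exact main (k - 1 + p'.1) (k - 1 + q'.1) (by omega) (by omega)
      (by have := q'.2; omega) hval
  · exact main (k - 1 + q'.1) (k - 1 + p'.1) (by omega) (by omega)
      (by have := p'.2; omega) hval.symm

end Part6

/-! ### part 7 : comparing `Bn` with `Mset` -/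

noncomputable def Pbound (A : Matrix (Fin m) (Fin m) ℕ) (Ψ : ℕ → Subshift A → ℝ)
    (CΨ : ℝ) (t : ℝ) : ℕ :=
  Nat.ceil (t / (-(PhiMax A Ψ CΨ))) + 1

section Part7

variable (Ψ : ℕ → Subshift A → ℝ) (CΨ : ℝ)
variable (hΨ : AlmostAdditive A Ψ CΨ) (hneg : PhiMax A Ψ CΨ < 0)
include hΨ hneg

lemma stop_le_Pbound {t : ℝ} {k : ℕ} (hk0 : 0 < k)
    (hkb : ((k : ℝ) - 1) * (-(PhiMax A Ψ CΨ)) < t) : k ≤ Pbound A Ψ CΨ t := by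
  have ha : (0:ℝ) < -(PhiMax A Ψ CΨ) := by linarith
  have h1 : ((k:ℝ) - 1) < t / (-(PhiMax A Ψ CΨ)) := by
    rw [lt_div_iff₀ ha]; linarith
  have h2 : ((k - 1 : ℕ) : ℝ) ≤ (Nat.ceil (t / (-(PhiMax A Ψ CΨ))) : ℝ) := by
    have hcast : ((k - 1 : ℕ) : ℝ) = (k:ℝ) - 1 := by
      rw [Nat.cast_sub (by omega)]; simp
    rw [hcast]
    exact le_trans h1.le (Nat.le_ceil _)
  have h3 : k - 1 ≤ Nat.ceil (t / (-(PhiMax A Ψ CΨ))) := by exact_mod_cast h2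
  rw [Pbound]
  omega

lemma exists_Bn_inj (hA : Mixing A) (hm2 : 2 ≤ m) {t : ℝ} (ht : 0 < t) :
    ∃ F : ↥(Bn A Ψ t) → ↥(Mset A Ψ t) × Fin m × Fin (Pbound A Ψ CΨ t + m + 1),
      Function.Injective F := by
  classical
  have hm : 0 < m := by omega
  have hdata : ∀ w : ↥(Bn A Ψ t), ∃ (p : ↥(Mset A Ψ t)) (c : Fin m)
      (L : Fin (Pbound A Ψ CΨ t + m + 1)),
      cyl A w.1 = cyl A (p.1 ++ [c]) ∧ w.1.length = L.1 ∧ (cyl A (p.1 ++ [c])).Nonempty := by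
    rintro ⟨w, x, hball⟩
    obtain ⟨k, hk0, hkb, hks, hkm, hballeq⟩ := exists_stop Ψ CΨ hΨ hneg hA hm x ht
    have hcyl : cyl A w = cyl A (wordPrefix x k) := by rw [hball, hballeq]
    have hxw : x ∈ cyl A w := by rw [hcyl]; exact mem_cyl_wordPrefix A x k
    have hwx : w = wordPrefix x w.length := eq_wordPrefix_of_mem_cyl A hxw
    have hkP : k ≤ Pbound A Ψ CΨ t := stop_le_Pbound Ψ CΨ hΨ hneg hk0 hkb
    have hlen : w.length ≤ k + m := by
      by_contra hc
      push_neg at hc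
      apply no_forced_cycle hA hm2 x hk0 (show k + m + 1 ≤ w.length by omega)
      rw [← hcyl]
      conv_rhs => rw [← hwx]
    have h10 : wordPrefix x (k - 1) ++ [x.1 (k - 1)] = wordPrefix x k := by
      rw [← wordPrefix_succ]
      congr 1
      omega
    refine ⟨⟨wordPrefix x (k - 1), hkm (k - 1) (by omega)⟩, x.1 (k - 1),
      ⟨w.length, by omega⟩, ?_, rfl, ?_⟩
    · show cyl A w = cyl A (wordPrefix x (k - 1) ++ [x.1 (k - 1)])
      rw [h10]
      exact hcyl
    · show (cyl A (wordPrefix x (k - 1) ++ [x.1 (k - 1)])).Nonempty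
      rw [h10]
      exact ⟨x, mem_cyl_wordPrefix A x k⟩
  choose p c L h1 h2 h3 using hdata
  refine ⟨fun w => (p w, c w, L w), ?_⟩
  intro w1 w2 heq
  have e1 : p w1 = p w2 := congrArg Prod.fst heq
  have e2 : c w1 = c w2 := congrArg (fun q => q.2.1) heq
  have e3 : L w1 = L w2 := congrArg (fun q => q.2.2) heq
  obtain ⟨z, hz⟩ := h3 w1
  have hz1 : z ∈ cyl A w1.1 := by rw [h1 w1]; exact hz
  have hz2 : z ∈ cyl A w2.1 := by
    rw [h1 w2]
    rw [← Subtype.ext_iff.1 e1, ← e2]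
    exact hz
  have g1 := eq_wordPrefix_of_mem_cyl A hz1
  have g2 := eq_wordPrefix_of_mem_cyl A hz2
  apply Subtype.ext
  rw [g1, g2, h2 w1, h2 w2, e3]

lemma Bn_finite (hA : Mixing A) (hm2 : 2 ≤ m) {t : ℝ} (ht : 0 < t) :
    Finite ↥(Bn A Ψ t) := by
  obtain ⟨F, hF⟩ := exists_Bn_inj Ψ CΨ hΨ hneg hA hm2 ht
  haveI := (Mset_finite Ψ CΨ hΨ hneg t).to_subtype
  exact Finite.of_injective F hF

lemma Bcard_le (hA : Mixing A) (hm2 : 2 ≤ m) {t : ℝ} (ht : 0 < t) :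
    Nat.card (Bn A Ψ t) ≤
      Nat.card (Mset A Ψ t) * (m * (Pbound A Ψ CΨ t + m + 1)) := by
  obtain ⟨F, hF⟩ := exists_Bn_inj Ψ CΨ hΨ hneg hA hm2 ht
  haveI := (Mset_finite Ψ CΨ hΨ hneg t).to_subtype
  calc Nat.card ↥(Bn A Ψ t) ≤
      Nat.card (↥(Mset A Ψ t) × Fin m × Fin (Pbound A Ψ CΨ t + m + 1)) :=
        Nat.card_le_card_of_injective F hF
    _ = Nat.card (Mset A Ψ t) * (m * (Pbound A Ψ CΨ t + m + 1)) := by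
        simp [Nat.card_prod]

lemma Mcard_le_Bcard (hA : Mixing A) (hm2 : 2 ≤ m) {t : ℝ} (ht : 0 < t) :
    Nat.card (Mset A Ψ t) ≤ Nat.card (Bn A Ψ t) * Pbound A Ψ CΨ t := by
  classical
  have hm : 0 < m := by omega
  have hdata : ∀ w : ↥(Mset A Ψ t), ∃ (v : ↥(Bn A Ψ t)) (L : Fin (Pbound A Ψ CΨ t)),
      w.1 = v.1.take L.1 := by
    rintro ⟨w, hw⟩
    have hwpos : 0 < wordSup A Ψ w := lt_trans (Real.exp_pos _) hw
    obtain ⟨x, hx⟩ := nonempty_cyl_of_wordSup_pos Ψ hwpos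
    have hwx : w = wordPrefix x w.length := eq_wordPrefix_of_mem_cyl A hx
    obtain ⟨k, hk0, hkb, hks, hkm, hballeq⟩ := exists_stop Ψ CΨ hΨ hneg hA hm x ht
    have hkP : k ≤ Pbound A Ψ CΨ t := stop_le_Pbound Ψ CΨ hΨ hneg hk0 hkb
    have hlen : w.length < k := by
      by_contra hc
      push_neg at hc
      have h4 : wordSup A Ψ (wordPrefix x w.length) ≤ wordSup A Ψ (wordPrefix x k) :=
        wordSup_prefix_antitone Ψ CΨ hΨ hneg x hc
      rw [← hwx] at h4
      have : Real.exp (-t) < wordSup A Ψ w := hw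
      linarith
    refine ⟨⟨wordPrefix x k, ⟨x, hballeq.symm⟩⟩, ⟨w.length, by omega⟩, ?_⟩
    show w = (wordPrefix x k).take w.length
    rw [take_wordPrefix A x (by omega : w.length ≤ k)]
    exact hwx
  choose v L hvL using hdata
  haveI := Bn_finite Ψ CΨ hΨ hneg hA hm2 ht
  have hinj : Function.Injective (fun w : ↥(Mset A Ψ t) => (v w, L w)) := by
    intro w1 w2 heq
    have e1 : v w1 = v w2 := congrArg Prod.fst heq
    have e2 : L w1 = L w2 := congrArg Prod.snd heq
    apply Subtype.ext
    rw [hvL w1, hvL w2, e1, e2]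
  calc Nat.card ↥(Mset A Ψ t) ≤ Nat.card (↥(Bn A Ψ t) × Fin (Pbound A Ψ CΨ t)) :=
        Nat.card_le_card_of_injective _ hinj
    _ = Nat.card (Bn A Ψ t) * Pbound A Ψ CΨ t := by simp [Nat.card_prod]

lemma Bn_nonempty (hA : Mixing A) (hm : 0 < m) {t : ℝ} (ht : 0 < t) :
    (Bn A Ψ t).Nonempty := by
  obtain ⟨x⟩ := subshift_nonempty hA hm
  obtain ⟨k, hk0, hkb, hks, hkm, hballeq⟩ := exists_stop Ψ CΨ hΨ hneg hA hm x ht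
  exact ⟨wordPrefix x k, ⟨x, hballeq.symm⟩⟩

end Part7

/-! ### part 8 : analytic helpers -/

section Part8

lemma tendsto_lognat_div : Tendsto (fun n : ℕ => Real.log n / n) atTop (𝓝 0) :=
  (Real.isLittleO_log_id_atTop.tendsto_div_nhds_zero).comp tendsto_natCast_atTop_atTop

lemma tendsto_log_linear (c d : ℝ) (hc : 0 ≤ c) (hd : 1 ≤ d) :
    Tendsto (fun n : ℕ => Real.log (c * n + d) / n) atTop (𝓝 0) := by
  have hupper : Tendsto (fun n : ℕ => Real.log (c + d) / n + Real.log n / n) atTop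
      (𝓝 (0 + 0)) :=
    (tendsto_const_div_atTop_nhds_zero_nat _).add tendsto_lognat_div
  rw [add_zero] at hupper
  apply tendsto_of_tendsto_of_tendsto_of_le_of_le' tendsto_const_nhds hupper
  · filter_upwards [eventually_ge_atTop 1] with n hn
    have h1 : (1:ℝ) ≤ c * n + d := by
      have : (0:ℝ) ≤ c * n := by positivity
      linarith
    have := Real.log_nonneg h1
    positivity
  · filter_upwards [eventually_ge_atTop 1] with n hn
    have hn1 : (1:ℝ) ≤ (n:ℝ) := by exact_mod_cast hn
    have h1 : c * n + d ≤ (c + d) * n := by nlinarith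
    have h2 : (0:ℝ) < c * n + d := by nlinarith
    have h3 : Real.log (c * n + d) ≤ Real.log ((c + d) * n) := Real.log_le_log h2 h1
    have h4 : Real.log ((c + d) * n) = Real.log (c + d) + Real.log n := by
      rw [Real.log_mul (by nlinarith) (by positivity)]
    rw [← add_div, ← h4]
    gcongr

lemma card_lists_le (hm : 0 < m) (N : ℕ) :
    Nat.card {l : List (Fin m) | l.length ≤ N} ≤ (N + 1) * m ^ N := by
  classical
  haveI : Finite ↥{l : List (Fin m) | l.length ≤ N} := (List.finite_length_le (Fin m) N).to_subtype
  have hinj : Function.Injective (fun l : ↥{l : List (Fin m) | l.length ≤ N} =>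
      ((⟨l.1.length, by have := l.2; simpa using Nat.lt_succ_of_le this⟩ : Fin (N + 1)),
        fun i : Fin N => l.1.getD i.1 ⟨0, hm⟩)) := by
    intro l1 l2 heq
    have e1 : l1.1.length = l2.1.length := by
      have := congrArg (fun q => (q.1 : Fin (N+1)).1) heq
      simpa using this
    have e2 : ∀ i : Fin N, l1.1.getD i.1 ⟨0, hm⟩ = l2.1.getD i.1 ⟨0, hm⟩ := by
      intro i
      exact congrFun (congrArg Prod.snd heq) i
    apply Subtype.ext
    apply List.ext_get e1
    intro i h1 h2
    have hiN : i < N := lt_of_lt_of_le h1 l1.2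
    have g1 : l1.1.getD i ⟨0, hm⟩ = l1.1.get ⟨i, h1⟩ := by
      rw [List.getD_eq_getElem l1.1 _ h1]
      simp
    have g2 : l2.1.getD i ⟨0, hm⟩ = l2.1.get ⟨i, h2⟩ := by
      rw [List.getD_eq_getElem l2.1 _ h2]
      simp
    rw [← g1, ← g2]
    exact e2 ⟨i, hiN⟩
  calc Nat.card ↥{l : List (Fin m) | l.length ≤ N} ≤
      Nat.card (Fin (N + 1) × (Fin N → Fin m)) := Nat.card_le_card_of_injective _ hinj
    _ = (N + 1) * m ^ N := by
        simp [Nat.card_prod, Nat.card_eq_fintype_card]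

end Part8

/-! ### part 9 : the main limit theorem for `m ≥ 2` -/

section Part9

theorem main_ge2 (hA : Mixing A) (hm2 : 2 ≤ m)
    (Ψ : ℕ → Subshift A → ℝ) (CΨ : ℝ) (hΨ : AlmostAdditive A Ψ CΨ)
    (hneg : PhiMax A Ψ CΨ < 0) :
    ∃ D : ℝ,
      Tendsto (fun n : ℕ => Real.log (Nat.card (Bn A Ψ (n : ℝ))) / n) atTop (𝓝 D) ∧
      D ≤ Real.log m / (-(PhiMax A Ψ CΨ)) := by
  classical
  have hm : 0 < m := by omega
  have ha0 : (0:ℝ) < -(PhiMax A Ψ CΨ) := by linarith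
  have hMpos : ∀ t : ℝ, 0 < t → 0 < Nat.card (Mset A Ψ t) := by
    intro t ht
    haveI := (Mset_finite Ψ CΨ hΨ hneg t).to_subtype
    haveI : Nonempty ↥(Mset A Ψ t) := ⟨⟨[], nil_mem_Mset Ψ CΨ hΨ hneg hA hm ht⟩⟩
    exact Nat.card_pos
  set K : ℕ := Nat.ceil CΨ + 1 with hKdef
  have hCK : CΨ ≤ (K:ℝ) := by
    have h := Nat.le_ceil CΨ
    have h2 : ((Nat.ceil CΨ : ℕ):ℝ) ≤ (K:ℝ) := by
      rw [hKdef]; push_cast; linarith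
    linarith
  set u : ℕ → ℝ := fun n =>
    if n = 0 then 0 else Real.log (((m:ℝ)+1) * (Nat.card (Mset A Ψ ((n:ℝ) + K)))) with hu
  have huval : ∀ n : ℕ, 1 ≤ n →
      u n = Real.log (((m:ℝ)+1) * (Nat.card (Mset A Ψ ((n:ℝ) + K)))) := by
    intro n hn; rw [hu]; simp only; rw [if_neg (by omega)]
  have hargpos : ∀ n : ℕ, 1 ≤ n → (0:ℝ) < (n:ℝ) + K := by
    intro n hn
    have h1 : (1:ℝ) ≤ (n:ℝ) := by exact_mod_cast hn
    have h2 : (0:ℝ) ≤ (K:ℝ) := Nat.cast_nonneg K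
    linarith
  have hprodpos : ∀ n : ℕ, 1 ≤ n →
      (1:ℝ) ≤ ((m:ℝ)+1) * (Nat.card (Mset A Ψ ((n:ℝ) + K))) := by
    intro n hn
    have h1 : 0 < Nat.card (Mset A Ψ ((n:ℝ) + K)) := hMpos _ (hargpos n hn)
    have h2 : (1:ℝ) ≤ (Nat.card (Mset A Ψ ((n:ℝ) + K)) : ℝ) := by exact_mod_cast h1
    have h3 : (0:ℝ) ≤ (m:ℝ) := Nat.cast_nonneg m
    nlinarith
  have hu0 : ∀ n, 0 ≤ u n := by
    intro n
    rcases Nat.eq_zero_or_pos n with h | h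
    · rw [hu]; simp [h]
    · rw [huval n h]; exact Real.log_nonneg (hprodpos n h)
  have hsub : Subadditive u := by
    intro p q
    rcases Nat.eq_zero_or_pos p with hp | hp
    · subst hp; rw [zero_add]; linarith [hu0 0, hu0 q]
    rcases Nat.eq_zero_or_pos q with hq | hq
    · subst hq; rw [add_zero]; linarith [hu0 0, hu0 p]
    have hsplit := Mcard_split Ψ CΨ hΨ hneg hA hm
      (t := (p:ℝ) + K) (s := (q:ℝ)) (hargpos p hp) (by exact_mod_cast hq)
    have harg : ((p:ℝ) + K) + (q:ℝ) = ((p + q : ℕ):ℝ) + (K:ℝ) := by push_cast; ring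
    rw [harg] at hsplit
    have hmono : Nat.card (Mset A Ψ ((q:ℝ) + CΨ)) ≤ Nat.card (Mset A Ψ ((q:ℝ) + K)) :=
      Nat.card_mono (Mset_finite Ψ CΨ hΨ hneg _) (Mset_mono Ψ (by linarith))
    have hsplit2 : Nat.card (Mset A Ψ (((p + q : ℕ):ℝ) + K)) ≤
        Nat.card (Mset A Ψ ((p:ℝ) + K)) * ((m + 1) * Nat.card (Mset A Ψ ((q:ℝ) + K))) := by
      apply le_trans hsplit
      exact Nat.mul_le_mul_left _ (Nat.mul_le_mul_left _ hmono)
    rw [huval (p + q) (by omega), huval p hp, huval q hq]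
    have hx : (0:ℝ) < ((m:ℝ)+1) * (Nat.card (Mset A Ψ ((p:ℝ) + K))) :=
      lt_of_lt_of_le one_pos (hprodpos p hp)
    have hy : (0:ℝ) < ((m:ℝ)+1) * (Nat.card (Mset A Ψ ((q:ℝ) + K))) :=
      lt_of_lt_of_le one_pos (hprodpos q hq)
    have hcast : (((m:ℝ)+1) * (Nat.card (Mset A Ψ (((p + q:ℕ):ℝ) + K)))) ≤
        (((m:ℝ)+1) * (Nat.card (Mset A Ψ ((p:ℝ) + K)))) *
          (((m:ℝ)+1) * (Nat.card (Mset A Ψ ((q:ℝ) + K)))) := by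
      have h5 : ((Nat.card (Mset A Ψ (((p + q:ℕ):ℝ) + K)) : ℝ)) ≤
          (Nat.card (Mset A Ψ ((p:ℝ) + K)) : ℝ) *
            (((m:ℝ) + 1) * (Nat.card (Mset A Ψ ((q:ℝ) + K)) : ℝ)) := by
        exact_mod_cast hsplit2
      have h9 := mul_le_mul_of_nonneg_left h5
        (by have : (0:ℝ) ≤ (m:ℝ) := Nat.cast_nonneg m; linarith : (0:ℝ) ≤ (m:ℝ) + 1)
      have h10 : ((m:ℝ)+1) * ((Nat.card (Mset A Ψ ((p:ℝ) + K)) : ℝ) *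
            (((m:ℝ) + 1) * (Nat.card (Mset A Ψ ((q:ℝ) + K)) : ℝ))) =
          (((m:ℝ)+1) * (Nat.card (Mset A Ψ ((p:ℝ) + K)) : ℝ)) *
            (((m:ℝ)+1) * (Nat.card (Mset A Ψ ((q:ℝ) + K)) : ℝ)) := by ring
      linarith [h9, h10]
    calc Real.log (((m:ℝ)+1) * (Nat.card (Mset A Ψ (((p + q:ℕ):ℝ) + K))))
        ≤ Real.log ((((m:ℝ)+1) * (Nat.card (Mset A Ψ ((p:ℝ) + K)))) *
            (((m:ℝ)+1) * (Nat.card (Mset A Ψ ((q:ℝ) + K))))) :=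
          Real.log_le_log (lt_of_lt_of_le one_pos (hprodpos (p+q) (by omega))) hcast
      _ = _ := Real.log_mul (ne_of_gt hx) (ne_of_gt hy)
  have hbdd : BddBelow (Set.range fun n : ℕ => u n / n) := by
    refine ⟨0, ?_⟩
    rintro r ⟨n, rfl⟩
    exact div_nonneg (hu0 n) (Nat.cast_nonneg n)
  have hulim : Tendsto (fun n : ℕ => u n / n) atTop (𝓝 hsub.lim) := hsub.tendsto_lim hbdd
  set L := hsub.lim with hLdef
  -- transfer the limit to the `Mset` counting function
  have hkey : ∀ n : ℕ, K + 1 ≤ n →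
      Real.log (Nat.card (Mset A Ψ (n:ℝ))) = u (n - K) - Real.log ((m:ℝ)+1) := by
    intro n hn
    have h1 : 1 ≤ n - K := by omega
    rw [huval (n - K) h1]
    have harg : ((n - K : ℕ):ℝ) + K = (n:ℝ) := by
      rw [Nat.cast_sub (by omega)]; ring
    rw [harg]
    have h2 : (0:ℝ) < (Nat.card (Mset A Ψ (n:ℝ)) : ℝ) := by
      exact_mod_cast hMpos (n:ℝ) (by exact_mod_cast (by omega : 0 < n))
    rw [Real.log_mul (by positivity) (ne_of_gt h2)]
    ring
  have hMlim : Tendsto (fun n : ℕ => Real.log (Nat.card (Mset A Ψ (n:ℝ))) / n) atTop (𝓝 L) := by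
    have h1 : Tendsto (fun n : ℕ => u (n - K) / ((n - K : ℕ):ℝ)) atTop (𝓝 L) :=
      hulim.comp (tendsto_sub_atTop_nat K)
    have h2 : Tendsto (fun n : ℕ => ((n - K : ℕ):ℝ) / (n:ℝ)) atTop (𝓝 1) := by
      have h3 : Tendsto (fun n : ℕ => 1 - (K:ℝ)/n) atTop (𝓝 (1 - 0)) :=
        tendsto_const_nhds.sub (tendsto_const_div_atTop_nhds_zero_nat (K:ℝ))
      rw [sub_zero] at h3
      refine Tendsto.congr' ?_ h3
      filter_upwards [eventually_ge_atTop (K + 1)] with n hn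
      have hn0 : (0:ℝ) < (n:ℝ) := by exact_mod_cast (by omega : 0 < n)
      rw [Nat.cast_sub (by omega)]
      field_simp
    have h4 := h1.mul h2
    rw [mul_one] at h4
    have h5 : Tendsto (fun n : ℕ => u (n - K) / (n:ℝ)) atTop (𝓝 L) := by
      refine Tendsto.congr' ?_ h4
      filter_upwards [eventually_ge_atTop (K + 1)] with n hn
      have hnK : ((n - K:ℕ):ℝ) ≠ 0 := by
        have : (0:ℕ) < n - K := by omega
        exact_mod_cast (by omega : ¬ (n - K = 0))
      show u (n - K) / ((n - K : ℕ):ℝ) * (((n - K : ℕ):ℝ) / (n:ℝ)) = u (n - K) / (n:ℝ)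
      rw [div_mul_div_comm, mul_comm (u (n - K)) _, mul_div_mul_left _ _ hnK]
    have h6 : Tendsto (fun n : ℕ => u (n - K)/(n:ℝ) - Real.log ((m:ℝ)+1)/n) atTop
        (𝓝 (L - 0)) := h5.sub (tendsto_const_div_atTop_nhds_zero_nat _)
    rw [sub_zero] at h6
    refine Tendsto.congr' ?_ h6
    filter_upwards [eventually_ge_atTop (K + 1)] with n hn
    rw [hkey n hn, sub_div]
  -- transfer the limit to the `Bn` counting function
  have hnpos : ∀ n : ℕ, 1 ≤ n → (0:ℝ) < (n:ℝ) := by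
    intro n hn; exact_mod_cast (by omega : 0 < n)
  have hdivle : ∀ (x y c : ℝ), 0 < c → x ≤ y → x / c ≤ y / c := by
    intro x y c hc h
    gcongr
  have hBpos : ∀ n : ℕ, 1 ≤ n → 0 < Nat.card (Bn A Ψ (n:ℝ)) := by
    intro n hn
    haveI := Bn_finite Ψ CΨ hΨ hneg hA hm2 (hnpos n hn)
    haveI : Nonempty ↥(Bn A Ψ (n:ℝ)) :=
      (Bn_nonempty Ψ CΨ hΨ hneg hA hm (hnpos n hn)).to_subtype
    exact Nat.card_pos
  have hPb1 : ∀ n : ℕ, 1 ≤ Pbound A Ψ CΨ (n:ℝ) := by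
    intro n; rw [Pbound]; omega
  have hPble : ∀ n : ℕ, 1 ≤ n →
      (Pbound A Ψ CΨ (n:ℝ) : ℝ) ≤ (1 / (-(PhiMax A Ψ CΨ))) * (n:ℝ) + 2 := by
    intro n hn
    rw [Pbound]
    push_cast
    have h1 : (Nat.ceil ((n:ℝ) / (-(PhiMax A Ψ CΨ))) : ℝ) < (n:ℝ) / (-(PhiMax A Ψ CΨ)) + 1 :=
      Nat.ceil_lt_add_one (by positivity)
    have h2 : (n:ℝ) / (-(PhiMax A Ψ CΨ)) = (1 / (-(PhiMax A Ψ CΨ))) * (n:ℝ) := by ring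
    linarith
  have hMcast : ∀ n : ℕ, 1 ≤ n → (1:ℝ) ≤ (Nat.card (Mset A Ψ (n:ℝ)) : ℝ) := by
    intro n hn; exact_mod_cast hMpos (n:ℝ) (hnpos n hn)
  have hBcast : ∀ n : ℕ, 1 ≤ n → (1:ℝ) ≤ (Nat.card (Bn A Ψ (n:ℝ)) : ℝ) := by
    intro n hn; exact_mod_cast hBpos n hn
  have hlow : ∀ᶠ n : ℕ in atTop,
      Real.log (Nat.card (Mset A Ψ (n:ℝ))) / n -
        Real.log ((1 / (-(PhiMax A Ψ CΨ))) * (n:ℝ) + 2) / n ≤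
        Real.log (Nat.card (Bn A Ψ (n:ℝ))) / n := by
    filter_upwards [eventually_ge_atTop 1] with n hn
    have hMB := Mcard_le_Bcard Ψ CΨ hΨ hneg hA hm2 (hnpos n hn)
    have h1 : (Nat.card (Mset A Ψ (n:ℝ)) : ℝ) ≤
        (Nat.card (Bn A Ψ (n:ℝ)) : ℝ) * (Pbound A Ψ CΨ (n:ℝ) : ℝ) := by
      exact_mod_cast hMB
    have hPbpos : (0:ℝ) < (Pbound A Ψ CΨ (n:ℝ) : ℝ) := by
      exact_mod_cast hPb1 n
    have h2 : Real.log (Nat.card (Mset A Ψ (n:ℝ))) ≤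
        Real.log (Nat.card (Bn A Ψ (n:ℝ))) + Real.log (Pbound A Ψ CΨ (n:ℝ)) := by
      have h3 := Real.log_le_log (by linarith [hMcast n hn]) h1
      rwa [Real.log_mul (by linarith [hBcast n hn]) (ne_of_gt hPbpos)] at h3
    have h4 : Real.log (Pbound A Ψ CΨ (n:ℝ)) ≤
        Real.log ((1 / (-(PhiMax A Ψ CΨ))) * (n:ℝ) + 2) :=
      Real.log_le_log hPbpos (hPble n hn)
    have h5 : Real.log (Nat.card (Mset A Ψ (n:ℝ))) -
        Real.log ((1 / (-(PhiMax A Ψ CΨ))) * (n:ℝ) + 2) ≤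
        Real.log (Nat.card (Bn A Ψ (n:ℝ))) := by linarith
    rw [← sub_div]
    exact hdivle _ _ _ (hnpos n hn) h5
  have hup : ∀ᶠ n : ℕ in atTop,
      Real.log (Nat.card (Bn A Ψ (n:ℝ))) / n ≤
        Real.log (Nat.card (Mset A Ψ (n:ℝ))) / n +
          Real.log (((m:ℝ) / (-(PhiMax A Ψ CΨ))) * (n:ℝ) + (m:ℝ) * ((m:ℝ) + 3)) / n := by
    filter_upwards [eventually_ge_atTop 1] with n hn
    have hBM := Bcard_le Ψ CΨ hΨ hneg hA hm2 (hnpos n hn)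
    have h1 : (Nat.card (Bn A Ψ (n:ℝ)) : ℝ) ≤
        (Nat.card (Mset A Ψ (n:ℝ)) : ℝ) *
          ((m:ℝ) * ((Pbound A Ψ CΨ (n:ℝ) : ℝ) + (m:ℝ) + 1)) := by
      exact_mod_cast hBM
    have hPbpos : (0:ℝ) < (Pbound A Ψ CΨ (n:ℝ) : ℝ) := by exact_mod_cast hPb1 n
    have hmpos : (0:ℝ) < (m:ℝ) := by exact_mod_cast hm
    have hfacpos : (0:ℝ) < (m:ℝ) * ((Pbound A Ψ CΨ (n:ℝ) : ℝ) + (m:ℝ) + 1) := by positivity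
    have h2 : Real.log (Nat.card (Bn A Ψ (n:ℝ))) ≤
        Real.log (Nat.card (Mset A Ψ (n:ℝ))) +
          Real.log ((m:ℝ) * ((Pbound A Ψ CΨ (n:ℝ) : ℝ) + (m:ℝ) + 1)) := by
      have h3 := Real.log_le_log (by linarith [hBcast n hn]) h1
      rwa [Real.log_mul (by linarith [hMcast n hn]) (ne_of_gt hfacpos)] at h3
    have h4 : Real.log ((m:ℝ) * ((Pbound A Ψ CΨ (n:ℝ) : ℝ) + (m:ℝ) + 1)) ≤
        Real.log (((m:ℝ) / (-(PhiMax A Ψ CΨ))) * (n:ℝ) + (m:ℝ) * ((m:ℝ) + 3)) := by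
      apply Real.log_le_log hfacpos
      have h5' := hPble n hn
      have hmpos' : (0:ℝ) ≤ (m:ℝ) := Nat.cast_nonneg m
      have h5 := mul_le_mul_of_nonneg_left h5' hmpos'
      have h6 : (m:ℝ) * (1 / (-(PhiMax A Ψ CΨ)) * (n:ℝ) + 2) =
          (m:ℝ) / (-(PhiMax A Ψ CΨ)) * (n:ℝ) + 2 * m := by ring
      have h7 : (m:ℝ) * ((Pbound A Ψ CΨ (n:ℝ) : ℝ) + (m:ℝ) + 1) =
          (m:ℝ) * (Pbound A Ψ CΨ (n:ℝ) : ℝ) + (m:ℝ) * (m:ℝ) + (m:ℝ) := by ring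
      have h8 : (m:ℝ) * ((m:ℝ) + 3) = (m:ℝ) * (m:ℝ) + 3 * (m:ℝ) := by ring
      linarith
    rw [← add_div]
    exact hdivle _ _ _ (hnpos n hn) (by linarith)
  have hlowlim : Tendsto (fun n : ℕ =>
      Real.log (Nat.card (Mset A Ψ (n:ℝ))) / n -
        Real.log ((1 / (-(PhiMax A Ψ CΨ))) * (n:ℝ) + 2) / n) atTop (𝓝 (L - 0)) :=
    hMlim.sub (tendsto_log_linear _ 2 (by positivity) (by norm_num))
  rw [sub_zero] at hlowlim
  have huplim : Tendsto (fun n : ℕ =>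
      Real.log (Nat.card (Mset A Ψ (n:ℝ))) / n +
        Real.log (((m:ℝ) / (-(PhiMax A Ψ CΨ))) * (n:ℝ) + (m:ℝ) * ((m:ℝ) + 3)) / n) atTop
      (𝓝 (L + 0)) := by
    apply hMlim.add (tendsto_log_linear _ _ (by positivity) ?_)
    have hm2r : (2:ℝ) ≤ (m:ℝ) := by exact_mod_cast hm2
    nlinarith
  rw [add_zero] at huplim
  have hBlim : Tendsto (fun n : ℕ => Real.log (Nat.card (Bn A Ψ (n:ℝ))) / n) atTop (𝓝 L) :=
    tendsto_of_tendsto_of_tendsto_of_le_of_le' hlowlim huplim hlow hup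
  refine ⟨L, hBlim, ?_⟩
  -- the upper bound on L
  have hQbound : ∀ᶠ n : ℕ in atTop,
      Real.log (Nat.card (Mset A Ψ (n:ℝ))) / n ≤
        Real.log ((1 / (-(PhiMax A Ψ CΨ))) * (n:ℝ) + 2) / n +
          ((Nat.ceil ((n:ℝ) / (-(PhiMax A Ψ CΨ))) : ℝ) / n) * Real.log m := by
    filter_upwards [eventually_ge_atTop 1] with n hn
    set Q := Nat.ceil ((n:ℝ) / (-(PhiMax A Ψ CΨ))) with hQdef
    have hsubQ : Mset A Ψ (n:ℝ) ⊆ {l : List (Fin m) | l.length ≤ Q} := by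
      intro w hw
      have h1 := Mset_length_lt Ψ CΨ hΨ hneg hw
      have h2 : (w.length:ℝ) ≤ (n:ℝ) / (-(PhiMax A Ψ CΨ)) := by
        rw [le_div_iff₀ ha0]; linarith
      have h3 : (w.length :ℝ) ≤ (Q:ℝ) := le_trans h2 (Nat.le_ceil _)
      exact_mod_cast h3
    have hcard : Nat.card (Mset A Ψ (n:ℝ)) ≤ (Q + 1) * m ^ Q :=
      le_trans (Nat.card_mono (List.finite_length_le _ _) hsubQ) (card_lists_le hm Q)
    have hlog : Real.log (Nat.card (Mset A Ψ (n:ℝ))) ≤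
        Real.log (((Q:ℝ) + 1) * (m:ℝ) ^ Q) := by
      apply Real.log_le_log (by linarith [hMcast n hn])
      have : ((Nat.card (Mset A Ψ (n:ℝ)) : ℕ) : ℝ) ≤ (((Q + 1) * m ^ Q : ℕ) : ℝ) := by
        exact_mod_cast hcard
      push_cast at this
      linarith
    rw [Real.log_mul (by positivity) (by positivity), Real.log_pow] at hlog
    have hQb : ((Q:ℝ) + 1) ≤ (1 / (-(PhiMax A Ψ CΨ))) * (n:ℝ) + 2 := by
      have h4 := Nat.ceil_lt_add_one (show (0:ℝ) ≤ (n:ℝ) / (-(PhiMax A Ψ CΨ)) by positivity)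
      have h5 : (n:ℝ) / (-(PhiMax A Ψ CΨ)) = (1 / (-(PhiMax A Ψ CΨ))) * (n:ℝ) := by ring
      rw [← hQdef] at h4
      linarith
    have h6 : Real.log ((Q:ℝ) + 1) ≤ Real.log ((1 / (-(PhiMax A Ψ CΨ))) * (n:ℝ) + 2) :=
      Real.log_le_log (by positivity) hQb
    have h7 : Real.log (Nat.card (Mset A Ψ (n:ℝ))) ≤
        Real.log ((1 / (-(PhiMax A Ψ CΨ))) * (n:ℝ) + 2) + (Q:ℝ) * Real.log m := by
      linarith
    have h8 := hdivle _ _ _ (hnpos n hn) h7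
    rw [add_div] at h8
    have h9 : (Q:ℝ) * Real.log m / n = ((Q:ℝ) / n) * Real.log m := by ring
    rwa [h9] at h8
  have hceil : Tendsto (fun n : ℕ => (Nat.ceil ((n:ℝ) / (-(PhiMax A Ψ CΨ))) : ℝ) / n) atTop
      (𝓝 (1 / (-(PhiMax A Ψ CΨ)))) := by
    have hupc : Tendsto (fun n : ℕ => 1 / (-(PhiMax A Ψ CΨ)) + 1 / (n:ℝ)) atTop
        (𝓝 (1 / (-(PhiMax A Ψ CΨ)) + 0)) :=
      tendsto_const_nhds.add (tendsto_const_div_atTop_nhds_zero_nat 1)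
    rw [add_zero] at hupc
    apply tendsto_of_tendsto_of_tendsto_of_le_of_le' tendsto_const_nhds hupc
    · filter_upwards [eventually_ge_atTop 1] with n hn
      have h1 : (n:ℝ) / (-(PhiMax A Ψ CΨ)) ≤ (Nat.ceil ((n:ℝ) / (-(PhiMax A Ψ CΨ))) : ℝ) :=
        Nat.le_ceil _
      have h2 := hdivle _ _ _ (hnpos n hn) h1
      have h3 : ((n:ℝ) / (-(PhiMax A Ψ CΨ))) / (n:ℝ) = 1 / (-(PhiMax A Ψ CΨ)) := by
        rw [div_right_comm, div_self (ne_of_gt (hnpos n hn))]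
      rwa [h3] at h2
    · filter_upwards [eventually_ge_atTop 1] with n hn
      have h1 : (Nat.ceil ((n:ℝ) / (-(PhiMax A Ψ CΨ))) : ℝ) ≤
          (n:ℝ) / (-(PhiMax A Ψ CΨ)) + 1 :=
        (Nat.ceil_lt_add_one (by positivity)).le
      have h2 := hdivle _ _ _ (hnpos n hn) h1
      have h3 : ((n:ℝ) / (-(PhiMax A Ψ CΨ)) + 1) / (n:ℝ) =
          1 / (-(PhiMax A Ψ CΨ)) + 1 / (n:ℝ) := by
        rw [add_div, div_right_comm, div_self (ne_of_gt (hnpos n hn))]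
      rwa [h3] at h2
  have hQlim : Tendsto (fun n : ℕ =>
      Real.log ((1 / (-(PhiMax A Ψ CΨ))) * (n:ℝ) + 2) / n +
        ((Nat.ceil ((n:ℝ) / (-(PhiMax A Ψ CΨ))) : ℝ) / n) * Real.log m) atTop
      (𝓝 (0 + (1 / (-(PhiMax A Ψ CΨ))) * Real.log m)) :=
    (tendsto_log_linear _ 2 (by positivity) (by norm_num)).add (hceil.mul_const _)
  rw [zero_add] at hQlim
  have hLle := le_of_tendsto_of_tendsto hMlim hQlim hQbound
  have hfin : (1 / (-(PhiMax A Ψ CΨ))) * Real.log m = Real.log m / (-(PhiMax A Ψ CΨ)) := by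
    ring
  linarith

end Part9


theorem statement4' {m : ℕ} (hm : 0 < m) (A : Matrix (Fin m) (Fin m) ℕ) (hA : Mixing A)
    (Ψ : ℕ → Subshift A → ℝ) (CΨ : ℝ) (hΨ : AlmostAdditive A Ψ CΨ)
    (hneg : PhiMax A Ψ CΨ < 0) :
    ∃ D : ℝ,
      Tendsto (fun n : ℕ => Real.log (Nat.card (Bn A Ψ (n : ℝ))) / n) atTop (𝓝 D) ∧
      DPsi A Ψ = D ∧
      D ≤ (1 + 1 / |PhiMax A Ψ CΨ|) * Real.log m := by
  have habs : |PhiMax A Ψ CΨ| = -(PhiMax A Ψ CΨ) := abs_of_neg hneg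
  have ha0 : (0:ℝ) < -(PhiMax A Ψ CΨ) := by linarith
  rcases Nat.lt_or_ge m 2 with hm1 | hm2
  · -- degenerate case `m = 1`
    have hm1' : m = 1 := by omega
    subst hm1'
    obtain ⟨x0⟩ := subshift_nonempty hA hm
    have hsub1 : ∀ x y : Subshift A, x = y := by
      intro x y
      apply Subtype.ext
      funext i
      apply Subsingleton.elim
    have hBn : ∀ t : ℝ, Bn A Ψ t = Set.univ := by
      intro t
      ext w
      simp only [Bn, Set.mem_setOf_eq, Set.mem_univ, iff_true]
      refine ⟨x0, ?_⟩
      ext y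
      constructor
      · intro _
        show dPsi A Ψ x0 y ≤ _
        rw [show y = x0 from (hsub1 x0 y).symm, dPsi_self]
        positivity
      · intro _
        rw [mem_cyl_iff]
        intro i h
        apply Subsingleton.elim
    have hinf : ∀ t : ℝ, (Bn A Ψ t).Infinite := by
      intro t
      rw [hBn]
      apply Set.infinite_of_injective_forall_mem
        (f := fun n : ℕ => List.replicate n (0 : Fin 1))
      · intro a b h
        simpa using congrArg List.length h
      · intro a
        trivial
    have hcard : ∀ t : ℝ, Nat.card (Bn A Ψ t) = 0 := by
      intro t
      haveI := (hinf t).to_subtype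
      exact Nat.card_eq_zero_of_infinite
    have hzero : (fun n : ℕ => Real.log (Nat.card (Bn A Ψ (n : ℝ))) / n) =
        fun _ : ℕ => (0:ℝ) := by
      funext n
      rw [hcard]
      simp
    refine ⟨0, ?_, ?_, ?_⟩
    · rw [hzero]; exact tendsto_const_nhds
    · show limUnder atTop _ = (0:ℝ)
      rw [hzero]
      exact Tendsto.limUnder_eq tendsto_const_nhds
    · have : Real.log ((1:ℕ):ℝ) = 0 := by norm_num
      rw [this, mul_zero]
  · obtain ⟨D, hT, hD⟩ := main_ge2 hA hm2 Ψ CΨ hΨ hneg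
    refine ⟨D, hT, hT.limUnder_eq, ?_⟩
    have hlogm : 0 ≤ Real.log m := Real.log_nonneg (by exact_mod_cast (by omega : 1 ≤ m))
    rw [habs]
    have h1 : Real.log m / (-(PhiMax A Ψ CΨ)) = (1 / (-(PhiMax A Ψ CΨ))) * Real.log m := by
      ring
    have h2 : (1 / (-(PhiMax A Ψ CΨ))) * Real.log m ≤
        (1 + 1 / (-(PhiMax A Ψ CΨ))) * Real.log m := by
      apply mul_le_mul_of_nonneg_right ?_ hlogm
      linarith
    linarith


/-- The limit `D(Ψ) = lim_n (log # B_n(Ψ))/n` exists and satisfies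
`D(Ψ) ≤ (1 + 1/|Ψ_max|) log m`. -/
theorem statement4 {m : ℕ} (hm : 0 < m) (A : Matrix (Fin m) (Fin m) ℕ) (hA : Mixing A)
    (Ψ : ℕ → Subshift A → ℝ) (CΨ : ℝ) (hΨ : AlmostAdditive A Ψ CΨ)
    (hneg : PhiMax A Ψ CΨ < 0) :
    ∃ D : ℝ,
      Tendsto (fun n : ℕ => Real.log (Nat.card (Bn A Ψ (n : ℝ))) / n) atTop (𝓝 D) ∧
      DPsi A Ψ = D ∧
      D ≤ (1 + 1 / |PhiMax A Ψ CΨ|) * Real.log m := by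
  exact statement4' hm A hA Ψ CΨ hΨ hneg
end AlmostAdditivePaper
end

section
/- Let A ⊂ ℝ^d be a convex set and h : A → ℝ a bounded weakly concave function. Then h is lower semi-continuous at every local cone point of A. In particular, h is lower semi-continuous on ri(A) and on any closed interval (segment) I ⊂ A, and h is lower semi-continuous on all of A if A is a closed convex polyhedron. -/
open Filter Topology MeasureTheory Set
open scoped ENNReal NNReal

namespace AlmostAdditivePaper

variable {m : ℕ}

variable {E : Type*} [NormedAddCommGroup E] [NormedSpace ℝ E]

section Core
variable {X : Type*} [NormedAddCommGroup X] [NormedSpace ℝ X]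

lemma WeaklyConcaveOn.mono {s t : Set X} {h : X → ℝ} (hst : s ⊆ t)
    (hwc : WeaklyConcaveOn t h) : WeaklyConcaveOn s h := by
  obtain ⟨c, hc, H⟩ := hwc
  exact ⟨c, hc, fun α hα β hβ => H α (hst hα) β (hst hβ)⟩

lemma lsc_core {s : Set X} {h : X → ℝ} {M : ℝ} (hM : ∀ x ∈ s, |h x| ≤ M)
    (hwc : WeaklyConcaveOn s h) {x : X} (hx : x ∈ s) {ε : ℝ} (hε : 0 < ε)
    (hcone : IsConePoint s x ε) : LowerSemicontinuousWithinAt h s x := by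
  obtain ⟨c, hc1, hcw⟩ := hwc
  have hc0 : 0 < c := lt_of_lt_of_le one_pos hc1
  have hM0 : 0 ≤ M := (abs_nonneg _).trans (hM x hx)
  intro b hb
  have hxb : 0 < h x - b := sub_pos.2 hb
  obtain ⟨δ, hδdef⟩ : ∃ δ : ℝ, δ = min (ε / 2) (ε * (h x - b) / (4 * M * c ^ 2 + 1)) :=
    ⟨_, rfl⟩
  have hδpos : 0 < δ := by rw [hδdef]; exact lt_min (by positivity) (by positivity)
  rw [Filter.Eventually, Metric.mem_nhdsWithin_iff]
  refine ⟨δ, hδpos, ?_⟩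
  rintro y ⟨hyb, hys⟩
  simp only [Set.mem_setOf_eq]
  rcases eq_or_ne y x with rfl | hyx
  · exact hb
  obtain ⟨r, hrdef⟩ : ∃ r : ℝ, r = ‖y - x‖ := ⟨_, rfl⟩
  have hr0 : 0 < r := by rw [hrdef]; exact norm_pos_iff.2 (sub_ne_zero.2 hyx)
  have hrδ : r < δ := by
    have := Metric.mem_ball.1 hyb
    rw [dist_eq_norm] at this
    rw [hrdef]; exact this
  have hδε2 : δ ≤ ε / 2 := by rw [hδdef]; exact min_le_left _ _
  have hrε2 : r < ε / 2 := lt_of_lt_of_le hrδ hδε2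
  have hrε : r < ε := by linarith
  obtain ⟨z, hzdef⟩ : ∃ z : X, z = x + (ε / r) • (y - x) := ⟨_, rfl⟩
  have hz : z ∈ s := by
    rw [hzdef, hrdef]
    exact hcone y ⟨hys, Metric.mem_ball.2 (by rw [dist_eq_norm, ← hrdef]; exact hrε)⟩ hyx
      (right_mem_segment ℝ _ _)
  obtain ⟨γ₁, hγ₁, γ₂, hγ₂, hkey⟩ := hcw z hz x hx
  have hγ₁0 : 0 < γ₁ := lt_of_lt_of_le (inv_pos.2 hc0) hγ₁.1
  have hγ₂0 : 0 < γ₂ := lt_of_lt_of_le (inv_pos.2 hc0) hγ₂.1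
  obtain ⟨t, htdef⟩ : ∃ t : ℝ, t = r / ε := ⟨_, rfl⟩
  have ht0 : 0 < t := by rw [htdef]; positivity
  have ht2 : t < 1 / 2 := by
    rw [htdef, div_lt_iff₀ hε]
    linarith
  have h1t : (0:ℝ) < 1 - t := by linarith
  have hD : (0:ℝ) < t * γ₂ + (1 - t) * γ₁ := by positivity
  have hDne : (t * γ₂ + (1 - t) * γ₁) ≠ 0 := ne_of_gt hD
  obtain ⟨l, hldef⟩ : ∃ l : ℝ, l = t * γ₂ / (t * γ₂ + (1 - t) * γ₁) := ⟨_, rfl⟩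
  have hl0 : 0 ≤ l := by rw [hldef]; positivity
  have hl1 : l ≤ 1 := by
    rw [hldef, div_le_one hD]
    linarith [mul_pos h1t hγ₁0]
  have hK : (0:ℝ) < γ₁ * γ₂ / (t * γ₂ + (1 - t) * γ₁) := by positivity
  have hKne := ne_of_gt hK
  have hsum : l * γ₁ + (1 - l) * γ₂ = γ₁ * γ₂ / (t * γ₂ + (1 - t) * γ₁) := by
    rw [hldef]
    field_simp
    ring
  have hlγ : l * γ₁ = t * (γ₁ * γ₂ / (t * γ₂ + (1 - t) * γ₁)) := by
    rw [hldef]; ring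
  have hlγ' : (1 - l) * γ₂ = (1 - t) * (γ₁ * γ₂ / (t * γ₂ + (1 - t) * γ₁)) := by
    rw [hldef]
    field_simp
    ring
  have hPy : (l * γ₁ + (1 - l) * γ₂)⁻¹ • ((l * γ₁) • z + ((1 - l) * γ₂) • x) = y := by
    rw [hsum, hlγ, hlγ']
    generalize hKK : γ₁ * γ₂ / (t * γ₂ + (1 - t) * γ₁) = K at hK hKne
    rw [smul_add, smul_smul, smul_smul,
      show K⁻¹ * (t * K) = t by field_simp,
      show K⁻¹ * ((1 - t) * K) = 1 - t by field_simp,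
      hzdef, smul_add, smul_smul,
      show t * (ε / r) = 1 by rw [htdef]; field_simp]
    module
  have hineq := hkey l ⟨hl0, hl1⟩
  rw [hPy] at hineq
  have hhz : -M ≤ h z := (abs_le.1 (hM z hz)).1
  have hhx : h x ≤ M := (abs_le.1 (hM x hx)).2
  have hl_le : l ≤ 2 * c ^ 2 * t := by
    have hden : (1 / 2) * c⁻¹ ≤ t * γ₂ + (1 - t) * γ₁ := by
      have h1 : (1:ℝ) / 2 ≤ 1 - t := by linarith
      have h2 : c⁻¹ ≤ γ₁ := hγ₁.1
      have h3 := mul_le_mul h1 h2 (le_of_lt (inv_pos.2 hc0)) (by linarith : (0:ℝ) ≤ 1 - t)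
      linarith [mul_pos ht0 hγ₂0]
    have h3 : l ≤ t * γ₂ / ((1 / 2) * c⁻¹) := by
      rw [hldef]
      exact div_le_div_of_nonneg_left (by positivity) (by positivity) hden
    have hcc : c * c⁻¹ = 1 := mul_inv_cancel₀ (ne_of_gt hc0)
    have h4 : t * γ₂ / ((1 / 2) * c⁻¹) ≤ 2 * c ^ 2 * t := by
      rw [div_le_iff₀ (by positivity)]
      have h5 : 2 * c ^ 2 * t * (1 / 2 * c⁻¹) = c * t * (c * c⁻¹) := by ring
      rw [h5, hcc, mul_one]
      calc t * γ₂ ≤ t * c := mul_le_mul_of_nonneg_left hγ₂.2 ht0.le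
        _ = c * t := mul_comm _ _
    linarith
  have hkey2 : t * (4 * M * c ^ 2 + 1) < h x - b := by
    have hδ2 : δ ≤ ε * (h x - b) / (4 * M * c ^ 2 + 1) := by
      rw [hδdef]; exact min_le_right _ _
    have hpos : (0:ℝ) < 4 * M * c ^ 2 + 1 := by positivity
    have hr' : r * (4 * M * c ^ 2 + 1) < ε * (h x - b) := by
      calc r * (4 * M * c ^ 2 + 1) < δ * (4 * M * c ^ 2 + 1) :=
            mul_lt_mul_of_pos_right hrδ hpos
        _ ≤ ε * (h x - b) := by rw [← le_div_iff₀ hpos]; exact hδ2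
    rw [htdef, div_mul_eq_mul_div, div_lt_iff₀ hε]
    linarith
  have e2 : l * (h x - h z) ≤ 2 * c ^ 2 * t * (2 * M) := by
    have h1 : h x - h z ≤ 2 * M := by linarith
    calc l * (h x - h z) ≤ l * (2 * M) := by
          rcases le_or_gt (h x - h z) (2 * M) with h' | h'
          · exact mul_le_mul_of_nonneg_left h1 hl0
          · linarith
      _ ≤ 2 * c ^ 2 * t * (2 * M) := mul_le_mul_of_nonneg_right hl_le (by positivity)
  linarith [hineq, ht0, e2, hkey2]

end Core

section Geo
variable {X : Type*} [NormedAddCommGroup X] [NormedSpace ℝ X]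

lemma isLocalConePoint_of_intrinsicInterior {s : Set X} {x : X}
    (hx : x ∈ intrinsicInterior ℝ s) : IsLocalConePoint s x := by
  obtain ⟨y, hy, rfl⟩ := mem_intrinsicInterior.1 hx
  obtain ⟨ε', hε', hball⟩ := Metric.mem_nhds_iff.1 (mem_interior_iff_mem_nhds.1 hy)
  have hys : (y : X) ∈ s := Set.mem_preimage.1 (interior_subset hy)
  refine ⟨ε' / 2, by positivity, ?_⟩
  rintro p ⟨hps, _⟩ hpx q hq
  rw [segment_eq_image'] at hq
  obtain ⟨θ, hθ, rfl⟩ := hq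
  dsimp only
  have hn0 : (0:ℝ) < ‖p - (y : X)‖ := norm_pos_iff.2 (sub_ne_zero.2 hpx)
  rw [add_sub_cancel_left, smul_smul]
  set cc : ℝ := θ * (ε' / 2 / ‖p - (y : X)‖) with hccdef
  have hcc0 : 0 ≤ cc := by
    have := hθ.1
    positivity
  -- the point lies in the affine span of s
  have hq_span : (y : X) + cc • (p - (y : X)) ∈ affineSpan ℝ s := by
    have hp' : p ∈ affineSpan ℝ s := subset_affineSpan ℝ s hps
    have hx' : (y : X) ∈ affineSpan ℝ s := y.2
    have := AffineSubspace.smul_vsub_vadd_mem (affineSpan ℝ s) cc hp' hx' hx'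
    simpa [vsub_eq_sub, vadd_eq_add, add_comm] using this
  -- and at distance < ε' from y
  have hdist : dist ((y : X) + cc • (p - (y : X))) (y : X) < ε' := by
    rw [dist_eq_norm, add_sub_cancel_left, norm_smul, Real.norm_eq_abs, abs_of_nonneg hcc0,
      hccdef]
    have h1 : θ * (ε' / 2 / ‖p - (y : X)‖) * ‖p - (y : X)‖ = θ * (ε' / 2) := by
      field_simp
    rw [h1]
    nlinarith [hθ.1, hθ.2, hε']
  have := hball (show (⟨_, hq_span⟩ : affineSpan ℝ s) ∈ Metric.ball y ε' by
    rw [Metric.mem_ball, Subtype.dist_eq]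
    exact hdist)
  exact this

lemma isConePoint_segment_left {a b : X} (hab : a ≠ b) :
    IsConePoint (segment ℝ a b) a ‖b - a‖ := by
  have hL : (0:ℝ) < ‖b - a‖ := norm_pos_iff.2 (sub_ne_zero.2 (Ne.symm hab))
  rintro y ⟨hy, _⟩ hya q hq
  rw [segment_eq_image'] at hy
  obtain ⟨s, hs, rfl⟩ := hy
  dsimp only at hya hq ⊢
  have hs0 : s ≠ 0 := by
    rintro rfl
    simp at hya
  have hs0' : 0 < s := lt_of_le_of_ne hs.1 (Ne.symm hs0)
  have key : a + (‖b - a‖ / ‖a + s • (b - a) - a‖) • (a + s • (b - a) - a) = b := by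
    rw [add_sub_cancel_left, norm_smul, Real.norm_eq_abs, abs_of_pos hs0', smul_smul]
    rw [show ‖b - a‖ / (s * ‖b - a‖) * s = 1 by field_simp]
    module
  rw [key] at hq
  exact hq

lemma isLocalConePoint_segment {a b x : X} (hx : x ∈ segment ℝ a b) :
    IsLocalConePoint (segment ℝ a b) x := by
  rcases eq_or_ne a b with rfl | hab
  · rw [segment_same] at hx ⊢
    exact ⟨1, one_pos, by rintro y ⟨hy, -⟩ hyx; rw [hy, hx] at hyx; exact absurd rfl hyx⟩
  have hL : (0:ℝ) < ‖b - a‖ := norm_pos_iff.2 (sub_ne_zero.2 (Ne.symm hab))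
  rw [segment_eq_image'] at hx
  obtain ⟨θ, hθ, rfl⟩ := hx
  dsimp only
  rcases eq_or_ne θ 0 with rfl | hθ0
  · refine ⟨‖b - a‖, hL, ?_⟩
    simpa using isConePoint_segment_left hab
  rcases eq_or_ne θ 1 with rfl | hθ1
  · refine ⟨‖a - b‖, by simpa [norm_sub_rev] using hL, ?_⟩
    have h1 : a + (1:ℝ) • (b - a) = b := by module
    have h2 := isConePoint_segment_left (Ne.symm hab)
    rw [segment_symm] at h2
    rw [h1]
    exact h2
  have hθ0' : 0 < θ := lt_of_le_of_ne hθ.1 (Ne.symm hθ0)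
  have hθ1' : θ < 1 := lt_of_le_of_ne hθ.2 hθ1
  refine ⟨min θ (1 - θ) * ‖b - a‖, mul_pos (lt_min hθ0' (by linarith)) hL, ?_⟩
  set x : X := a + θ • (b - a) with hxdef
  set ε : ℝ := min θ (1 - θ) * ‖b - a‖ with hεdef
  rintro y ⟨hy, _⟩ hyx q hq
  rw [segment_eq_image'] at hy
  obtain ⟨s, hs, rfl⟩ := hy
  dsimp only at hyx ⊢
  have hsθ : s ≠ θ := by
    intro hsθ; rw [hsθ] at hyx; exact hyx rfl
  have hyxd : a + s • (b - a) - x = (s - θ) • (b - a) := by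
    rw [hxdef]; module
  have hnrm : ‖a + s • (b - a) - x‖ = |s - θ| * ‖b - a‖ := by
    rw [hyxd, norm_smul, Real.norm_eq_abs]
  have habs : 0 < |s - θ| := abs_pos.2 (sub_ne_zero.2 hsθ)
  rw [segment_eq_image'] at hq
  obtain ⟨τ, hτ, rfl⟩ := hq
  simp only [add_sub_cancel_left]
  rw [hnrm, hyxd, smul_smul, smul_smul]
  set κ : ℝ := τ * (ε / (|s - θ| * ‖b - a‖) * (s - θ)) with hκdef
  have hε0 : (0:ℝ) < ε := by rw [hεdef]; exact mul_pos (lt_min hθ0' (by linarith)) hL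
  have hκabs : |κ| ≤ ε / ‖b - a‖ := by
    have hY : (0:ℝ) ≤ ε / (|s - θ| * ‖b - a‖) := le_of_lt (div_pos hε0 (by positivity))
    rw [hκdef, abs_mul, abs_mul, abs_of_nonneg hτ.1, abs_of_nonneg hY]
    have h1 : ε / (|s - θ| * ‖b - a‖) * |s - θ| = ε / ‖b - a‖ := by
      rw [div_mul_eq_mul_div]
      rw [div_eq_div_iff (by positivity) (ne_of_gt hL)]
      ring
    calc τ * (ε / (|s - θ| * ‖b - a‖) * |s - θ|) ≤ 1 * (ε / (|s - θ| * ‖b - a‖) * |s - θ|) :=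
          mul_le_mul_of_nonneg_right hτ.2 (mul_nonneg hY (abs_nonneg _))
      _ = ε / ‖b - a‖ := by rw [one_mul, h1]
  have hεL : ε / ‖b - a‖ = min θ (1 - θ) := by
    rw [hεdef, mul_div_assoc, div_self (ne_of_gt hL), mul_one]
  rw [hεL] at hκabs
  have hmin1 : min θ (1 - θ) ≤ θ := min_le_left _ _
  have hmin2 : min θ (1 - θ) ≤ 1 - θ := min_le_right _ _
  have hκ1 : 0 ≤ θ + κ := by
    have := (abs_le.1 hκabs).1
    linarith
  have hκ2 : θ + κ ≤ 1 := by
    have := (abs_le.1 hκabs).2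
    linarith
  rw [segment_eq_image']
  refine ⟨θ + κ, ⟨hκ1, hκ2⟩, ?_⟩
  rw [hxdef]
  module

end Geo

section Poly

lemma cone_carath {X : Type*} [AddCommGroup X] [Module ℝ X] (V : Finset X) :
    ∀ f : X → ℝ, (∀ v ∈ V, 0 ≤ f v) →
    ∃ (W : Finset X) (g : X → ℝ), W ⊆ V ∧ LinearIndependent ℝ (fun i : ↥W => (i : X)) ∧
      (∀ v ∈ W, 0 ≤ g v) ∧ ∑ v ∈ W, g v • v = ∑ v ∈ V, f v • v := by
  classical
  induction V using Finset.strongInduction with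
  | _ V ih =>
    intro f hf
    by_cases hind : LinearIndependent ℝ (fun i : ↥V => (i : X))
    · exact ⟨V, f, Finset.Subset.rfl, hind, hf, rfl⟩
    obtain ⟨g0, hg0sum, i₀, hi₀⟩ := Fintype.not_linearIndependent_iff.1 hind
    obtain ⟨g1, hg1sum, hi₁⟩ : ∃ g1 : ↥V → ℝ, ∑ i, g1 i • (i : X) = 0 ∧ 0 < g1 i₀ := by
      rcases lt_or_gt_of_ne hi₀ with hneg | hpos
      · refine ⟨-g0, ?_, by simpa using hneg⟩
        simp only [Pi.neg_apply, neg_smul, Finset.sum_neg_distrib, hg0sum, neg_zero]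
      · exact ⟨g0, hg0sum, hpos⟩
    set c : X → ℝ := fun v => if hv : v ∈ V then g1 ⟨v, hv⟩ else 0 with hcdef
    have hcsum : ∑ v ∈ V, c v • v = 0 := by
      rw [← hg1sum, ← Finset.sum_coe_sort V (fun v => c v • v)]
      apply Finset.sum_congr rfl
      intro i _
      congr 1
      simp [hcdef]
    set T : Finset X := V.filter (fun v => 0 < c v) with hTdef
    have hcmem : c (i₀ : X) = g1 i₀ := by simp [hcdef, i₀.2]
    have hT : (i₀ : X) ∈ T := by
      rw [hTdef, Finset.mem_filter]
      exact ⟨i₀.2, by rw [hcmem]; exact hi₁⟩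
    obtain ⟨v₀, hv₀T, hv₀min⟩ := Finset.exists_min_image T (fun v => f v / c v) ⟨_, hT⟩
    have hv₀T' := hv₀T
    rw [hTdef, Finset.mem_filter] at hv₀T'
    obtain ⟨hv₀V, hv₀c⟩ := hv₀T'
    set r : ℝ := f v₀ / c v₀ with hrdef
    have hr0 : 0 ≤ r := div_nonneg (hf v₀ hv₀V) (le_of_lt hv₀c)
    set f' : X → ℝ := fun v => f v - r * c v with hf'def
    have hf'0 : ∀ v ∈ V.erase v₀, 0 ≤ f' v := by
      intro v hv
      have hvV : v ∈ V := Finset.mem_of_mem_erase hv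
      show 0 ≤ f v - r * c v
      rcases le_or_gt (c v) 0 with hc | hc
      · have h1 : r * c v ≤ 0 := mul_nonpos_of_nonneg_of_nonpos hr0 hc
        have := hf v hvV
        linarith
      · have hvT : v ∈ T := by rw [hTdef, Finset.mem_filter]; exact ⟨hvV, hc⟩
        have h2 := hv₀min v hvT
        rw [sub_nonneg]
        calc r * c v ≤ f v / c v * c v := by
              apply mul_le_mul_of_nonneg_right h2 (le_of_lt hc)
          _ = f v := div_mul_cancel₀ _ (ne_of_gt hc)
    have hf'v₀ : f' v₀ = 0 := by
      show f v₀ - r * c v₀ = 0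
      rw [hrdef, div_mul_cancel₀ _ (ne_of_gt hv₀c)]
      ring
    have hsum' : ∑ v ∈ V.erase v₀, f' v • v = ∑ v ∈ V, f v • v := by
      rw [Finset.sum_erase _ (by rw [hf'v₀, zero_smul])]
      have h3 : ∑ v ∈ V, f' v • v = ∑ v ∈ V, (f v • v - (r * c v) • v) := by
        apply Finset.sum_congr rfl
        intro v _
        show (f v - r * c v) • v = _
        rw [sub_smul]
      rw [h3, Finset.sum_sub_distrib]
      have h4 : ∑ v ∈ V, (r * c v) • v = r • ∑ v ∈ V, c v • v := by
        rw [Finset.smul_sum]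
        apply Finset.sum_congr rfl
        intro v _
        rw [smul_smul]
      rw [h4, hcsum, smul_zero, sub_zero]
    obtain ⟨W, g, hWsub, hWind, hg0', hgsum⟩ :=
      ih (V.erase v₀) (Finset.erase_ssubset hv₀V) f' hf'0
    exact ⟨W, g, hWsub.trans (Finset.erase_subset _ _), hWind, hg0', by rw [hgsum, hsum']⟩

variable {X : Type*} [NormedAddCommGroup X] [NormedSpace ℝ X] [FiniteDimensional ℝ X]

set_option maxHeartbeats 1000000 in
set_option synthInstance.maxHeartbeats 400000 in
lemma indep_bound (W : Finset X)
    (hW : LinearIndependent ℝ (fun i : ↥W => (i : X))) :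
    ∃ K : ℝ, 0 < K ∧ ∀ g : X → ℝ, ∑ v ∈ W, g v ≤ K * ‖∑ v ∈ W, g v • v‖ := by
  classical
  set φ : (↥W → ℝ) →ₗ[ℝ] X := Fintype.linearCombination ℝ (fun i : ↥W => (i : X)) with hφdef
  have hφapp : ∀ u : ↥W → ℝ, φ u = ∑ i, u i • (i : X) := fun u => by
    rw [hφdef, Fintype.linearCombination_apply]
  have hinj : Function.Injective φ := by
    intro u1 u2 h12
    have h0 : φ (u1 - u2) = 0 := by rw [map_sub, h12, sub_self]
    rw [hφapp] at h0
    have hz := Fintype.linearIndependent_iff.1 hW (u1 - u2) h0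
    funext i
    have := hz i
    rw [Pi.sub_apply, sub_eq_zero] at this
    exact this
  set e := LinearEquiv.ofInjective φ hinj with hedef
  set L := LinearMap.toContinuousLinearMap e.symm.toLinearMap with hLdef
  obtain ⟨K, hKdef⟩ : ∃ K : ℝ, K = (W.card : ℝ) * ‖L‖ + 1 := ⟨_, rfl⟩
  have hK0 : 0 < K := by
    rw [hKdef]
    have h1 : (0:ℝ) ≤ (W.card : ℝ) * ‖L‖ := mul_nonneg (Nat.cast_nonneg _) (ContinuousLinearMap.opNorm_nonneg L)
    linarith
  refine ⟨K, hK0, ?_⟩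
  intro g
  set u : ↥W → ℝ := fun i => g (i : X) with hudef
  have hsum_eq : ∑ v ∈ W, g v • v = φ u := by
    rw [hφapp, ← Finset.sum_coe_sort W (fun v => g v • v)]
  have hueq : u = L (e u) := by
    rw [hLdef, LinearMap.coe_toContinuousLinearMap']
    exact (e.symm_apply_apply u).symm
  have hnorm_u : ‖u‖ ≤ ‖L‖ * ‖φ u‖ := by
    calc ‖u‖ = ‖L (e u)‖ := by rw [← hueq]
      _ ≤ ‖L‖ * ‖e u‖ := L.le_opNorm _
      _ = ‖L‖ * ‖φ u‖ := by
          have h5 : ((e u : LinearMap.range φ) : X) = φ u :=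
            LinearEquiv.ofInjective_apply φ u
          rw [show ‖e u‖ = ‖φ u‖ by rw [← h5]; rfl]
  have hsum_le : ∑ v ∈ W, g v ≤ (W.card : ℝ) * ‖u‖ := by
    rw [← Finset.sum_coe_sort W g]
    calc ∑ i : ↥W, g (i : X) ≤ ∑ _i : ↥W, ‖u‖ := by
          apply Finset.sum_le_sum
          intro i _
          calc g (i : X) = u i := rfl
            _ ≤ |u i| := le_abs_self _
            _ = ‖u i‖ := (Real.norm_eq_abs _).symm
            _ ≤ ‖u‖ := norm_le_pi_norm u i
      _ = (W.card : ℝ) * ‖u‖ := by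
          rw [Finset.sum_const, Finset.card_univ, Fintype.card_coe, nsmul_eq_mul]
  have hφnn : 0 ≤ ‖φ u‖ := norm_nonneg _
  have hLnn : 0 ≤ ‖L‖ := ContinuousLinearMap.opNorm_nonneg L
  calc ∑ v ∈ W, g v ≤ (W.card : ℝ) * ‖u‖ := hsum_le
    _ ≤ (W.card : ℝ) * (‖L‖ * ‖φ u‖) := by
        exact mul_le_mul_of_nonneg_left hnorm_u (Nat.cast_nonneg _)
    _ = ((W.card : ℝ) * ‖L‖) * ‖φ u‖ := by ring
    _ ≤ K * ‖φ u‖ := by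
        apply mul_le_mul_of_nonneg_right _ hφnn
        rw [hKdef]
        linarith
    _ = K * ‖∑ v ∈ W, g v • v‖ := by rw [hsum_eq]

end Poly
section Poly2
variable {X : Type*} [NormedAddCommGroup X] [NormedSpace ℝ X] [FiniteDimensional ℝ X]

lemma isLocalConePoint_polytope (F : Finset X) {x : X}
    (hx : x ∈ convexHull ℝ (F : Set X)) :
    IsLocalConePoint (convexHull ℝ (F : Set X)) x := by
  classical
  set V : Finset X := F.image (fun v => v - x) with hVdef
  have hKex : ∀ W : Finset X, ∃ K : ℝ, 0 < K ∧
      (LinearIndependent ℝ (fun i : ↥W => (i : X)) →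
        ∀ g : X → ℝ, ∑ v ∈ W, g v ≤ K * ‖∑ v ∈ W, g v • v‖) := by
    intro W
    by_cases hi : LinearIndependent ℝ (fun i : ↥W => (i : X))
    · obtain ⟨K, hK0, hK⟩ := indep_bound W hi
      exact ⟨K, hK0, fun _ => hK⟩
    · exact ⟨1, one_pos, fun h => absurd h hi⟩
  choose K hK0 hK using hKex
  obtain ⟨Km, hKm⟩ : ∃ Km : ℝ, ∀ W ∈ V.powerset, K W ≤ Km :=
    ⟨(V.powerset.image K).max' (Finset.Nonempty.image ⟨∅, Finset.empty_mem_powerset V⟩ K),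
      fun W hW => Finset.le_max' _ _ (Finset.mem_image_of_mem K hW)⟩
  have hKm0 : 0 < Km := lt_of_lt_of_le (hK0 ∅) (hKm ∅ (Finset.empty_mem_powerset V))
  refine ⟨Km⁻¹, inv_pos.2 hKm0, ?_⟩
  rintro y ⟨hyP, -⟩ hyx
  have hP : Convex ℝ (convexHull ℝ (F : Set X)) := convex_convexHull ℝ _
  refine hP.segment_subset hx ?_
  obtain ⟨r, hrdef⟩ : ∃ r : ℝ, r = ‖y - x‖ := ⟨_, rfl⟩
  have hr0 : 0 < r := by rw [hrdef]; exact norm_pos_iff.2 (sub_ne_zero.2 hyx)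
  rw [← hrdef]
  -- decompose y as a convex combination
  rw [Finset.convexHull_eq] at hyP
  obtain ⟨lam, hlam0, hlam1, hlamc⟩ := hyP
  have hy_eq : ∑ v ∈ F, lam v • v = y := by
    rw [← hlamc, Finset.centerMass_eq_of_sum_1 F id hlam1]
    rfl
  set f : X → ℝ := fun w => (Km⁻¹ / r) * lam (w + x) with hfdef
  have hf0 : ∀ w ∈ V, 0 ≤ f w := by
    intro w hw
    rw [hVdef] at hw
    obtain ⟨v, hv, rfl⟩ := Finset.mem_image.1 hw
    have : v - x + x = v := sub_add_cancel v x
    rw [hfdef]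
    dsimp only
    rw [this]
    exact mul_nonneg (by positivity) (hlam0 v hv)
  have hfsum : ∑ w ∈ V, f w • w = (Km⁻¹ / r) • (y - x) := by
    rw [hVdef, Finset.sum_image (fun a _ b _ h => by
      have := congrArg (fun z => z + x) h
      simpa [sub_add_cancel] using this)]
    have h1 : ∀ v ∈ F, f (v - x) • (v - x) = (Km⁻¹ / r) • (lam v • v - lam v • x) := by
      intro v hv
      rw [hfdef]
      dsimp only
      rw [sub_add_cancel, ← smul_sub, smul_smul, smul_sub]
    rw [Finset.sum_congr rfl h1, ← Finset.smul_sum]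
    congr 1
    rw [Finset.sum_sub_distrib, ← Finset.sum_smul, hlam1, hy_eq, one_smul]
  obtain ⟨W, g, hWV, hWind, hg0, hgsum⟩ := cone_carath V f hf0
  have hnorm : ‖∑ w ∈ W, g w • w‖ = Km⁻¹ := by
    rw [hgsum, hfsum, norm_smul, Real.norm_eq_abs, abs_of_pos (by positivity), ← hrdef,
      div_mul_cancel₀ _ (ne_of_gt hr0)]
  have hgle : ∑ w ∈ W, g w ≤ 1 := by
    have hb := hK W hWind g
    rw [hnorm] at hb
    calc ∑ w ∈ W, g w ≤ K W * Km⁻¹ := hb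
      _ ≤ Km * Km⁻¹ := mul_le_mul_of_nonneg_right
          (hKm W (Finset.mem_powerset.2 hWV)) (le_of_lt (inv_pos.2 hKm0))
      _ = 1 := mul_inv_cancel₀ (ne_of_gt hKm0)
  have h0W : (0 : X) ∉ W := fun h0 => hWind.ne_zero ⟨0, h0⟩ rfl
  have hxnot : x ∉ W.image (fun w => w + x) := by
    intro hc
    obtain ⟨w, hw, hwx⟩ := Finset.mem_image.1 hc
    have hw0 : w = 0 := by
      have : w + x = 0 + x := by rw [zero_add]; exact hwx
      exact add_right_cancel this
    exact h0W (hw0 ▸ hw)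
  set t : Finset X := insert x (W.image (fun w => w + x)) with htdef
  set μ : X → ℝ := fun p => if p = x then 1 - ∑ w ∈ W, g w else g (p - x) with hμdef
  have himg : ∀ w ∈ W, μ (w + x) = g w := by
    intro w hw
    have hwx : w + x ≠ x := by
      intro hc
      have : w = 0 := by
        have h' : w + x = 0 + x := by rw [zero_add]; exact hc
        exact add_right_cancel h'
      exact h0W (this ▸ hw)
    rw [hμdef]
    dsimp only
    rw [if_neg hwx, add_sub_cancel_right]
  have hinj : ∀ a ∈ W, ∀ b ∈ W, a + x = b + x → a = b :=
    fun a _ b _ h => add_right_cancel h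
  have hμ1 : ∑ p ∈ t, μ p = 1 := by
    rw [htdef, Finset.sum_insert hxnot, Finset.sum_image hinj]
    rw [show μ x = 1 - ∑ w ∈ W, g w from if_pos rfl]
    rw [Finset.sum_congr rfl himg]
    ring
  have hμ0 : ∀ p ∈ t, 0 ≤ μ p := by
    intro p hp
    rw [htdef, Finset.mem_insert] at hp
    rcases hp with rfl | hp
    · rw [show μ p = 1 - ∑ w ∈ W, g w from if_pos rfl]
      linarith
    · obtain ⟨w, hw, rfl⟩ := Finset.mem_image.1 hp
      rw [himg w hw]
      exact hg0 w hw
  have hmem : ∀ p ∈ t, p ∈ convexHull ℝ (F : Set X) := by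
    intro p hp
    rw [htdef, Finset.mem_insert] at hp
    rcases hp with rfl | hp
    · exact hx
    · obtain ⟨w, hw, rfl⟩ := Finset.mem_image.1 hp
      have hwV : w ∈ V := hWV hw
      rw [hVdef] at hwV
      obtain ⟨v, hv, rfl⟩ := Finset.mem_image.1 hwV
      rw [sub_add_cancel]
      exact subset_convexHull ℝ (F : Set X) hv
  have hz_mem : ∑ p ∈ t, μ p • p ∈ convexHull ℝ (F : Set X) :=
    (convex_iff_sum_mem.1 hP) t μ hμ0 hμ1 hmem
  have hz_eq : ∑ p ∈ t, μ p • p = x + (Km⁻¹ / r) • (y - x) := by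
    rw [htdef, Finset.sum_insert hxnot, Finset.sum_image hinj]
    rw [show μ x = 1 - ∑ w ∈ W, g w from if_pos rfl]
    have h2 : ∀ w ∈ W, μ (w + x) • (w + x) = g w • w + g w • x := by
      intro w hw
      rw [himg w hw, smul_add]
    rw [Finset.sum_congr rfl h2, Finset.sum_add_distrib, ← Finset.sum_smul, hgsum, hfsum]
    set S : ℝ := ∑ w ∈ W, g w
    module
  rw [← hz_eq]
  exact hz_mem

end Poly2

/-- A bounded weakly concave function on a convex set `A ⊆ ℝ^d` is
lower semi-continuous at every local cone point of `A`; in particular on `ri(A)`, on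
every closed segment contained in `A`, and on all of `A` when `A` is a closed convex
polyhedron. -/
theorem statement8 {d : ℕ} (A : Set (EuclideanSpace ℝ (Fin d))) (hconv : Convex ℝ A)
    (h : EuclideanSpace ℝ (Fin d) → ℝ) (hbdd : ∃ M : ℝ, ∀ x ∈ A, |h x| ≤ M)
    (hwc : WeaklyConcaveOn A h) :
    (∀ x ∈ A, IsLocalConePoint A x → LowerSemicontinuousWithinAt h A x) ∧
    (∀ x ∈ intrinsicInterior ℝ A, LowerSemicontinuousWithinAt h A x) ∧
    (∀ a b : EuclideanSpace ℝ (Fin d), segment ℝ a b ⊆ A →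
      LowerSemicontinuousOn h (segment ℝ a b)) ∧
    ((∃ F : Finset (EuclideanSpace ℝ (Fin d)), A = convexHull ℝ (F : Set _)) →
      LowerSemicontinuousOn h A) := by
  obtain ⟨M, hM⟩ := hbdd
  have part1 : ∀ x ∈ A, IsLocalConePoint A x → LowerSemicontinuousWithinAt h A x := by
    intro x hxA hlcp
    obtain ⟨ε, hε, hcone⟩ := hlcp
    exact lsc_core hM hwc hxA hε hcone
  refine ⟨part1, ?_, ?_, ?_⟩
  · intro x hx
    exact part1 x (intrinsicInterior_subset hx) (isLocalConePoint_of_intrinsicInterior hx)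
  · intro a b hsub x hxseg
    obtain ⟨ε, hε, hcone⟩ := isLocalConePoint_segment hxseg
    exact lsc_core (fun z hz => hM z (hsub hz)) (hwc.mono hsub) hxseg hε hcone
  · rintro ⟨F, rfl⟩ x hxA
    exact part1 x hxA (isLocalConePoint_polytope F hxA)
end AlmostAdditivePaper
end
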